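/- arXiv:0712.2863 — 4 statements merged into one kernel-verified Lean document; each statement's English description precedes it below -/
import Mathlib

section
/- For piecewise constant ℓ ≤ r and ψ, each with finitely many jumps, the pair (ψ − Ξ_{ℓ,r}(ψ), −Ξ_{ℓ,r}(ψ)) solves the extended Skorokhod problem on [ℓ(·), r(·)] for ψ. -/
open Set Filter

/-- A càdlàg real-valued function on `[0, ∞)`. -/
def Cadlag (f : ℝ → ℝ) : Prop :=
  ∀ t : ℝ, 0 ≤ t → ContinuousWithinAt f (Set.Ici t) t ∧
    (0 < t → ∃ l : ℝ, Filter.Tendsto f (nhdsWithin t (Set.Iio t)) (nhds l))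

/-- `(φ, η)` solves the extended Skorokhod problem (ESP) on the time-dependent
interval `[ℓ(·), r(·)]` for the input `ψ`. -/
def ESP (l r ψ φ η : ℝ → ℝ) : Prop :=
  (∀ t : ℝ, 0 ≤ t → φ t = ψ t + η t ∧ l t ≤ φ t ∧ φ t ≤ r t) ∧
  (∀ s t : ℝ, 0 ≤ s → s ≤ t → (∀ u, s < u → u ≤ t → φ u < r u) → η s ≤ η t) ∧
  (∀ s t : ℝ, 0 ≤ s → s ≤ t → (∀ u, s < u → u ≤ t → l u < φ u) → η t ≤ η s) ∧
  (∀ t : ℝ, 0 < t →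
    (φ t < r t → Function.leftLim η t ≤ η t) ∧
    (l t < φ t → η t ≤ Function.leftLim η t)) ∧
  ((φ 0 < r 0 → 0 ≤ η 0) ∧ (l 0 < φ 0 → η 0 ≤ 0))

/-- `(φ, η)` together with the pair of nondecreasing right-continuous constraining
processes `(η_ℓ, η_r)` solves the Skorokhod problem (SP) on `[ℓ(·), r(·)]` for `ψ`:
`φ = ψ + η ∈ [ℓ, r]`, `η = η_ℓ - η_r`, and the Lebesgue–Stieltjes measures of
`η_ℓ` and `η_r` do not charge `{φ > ℓ}` and `{φ < r}` respectively. -/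
def SPwith (l r ψ φ η : ℝ → ℝ) (ηl ηr : StieltjesFunction ℝ) : Prop :=
  (∀ t : ℝ, 0 ≤ t → φ t = ψ t + η t ∧ l t ≤ φ t ∧ φ t ≤ r t) ∧
  (∀ t : ℝ, 0 ≤ t → η t = ηl t - ηr t) ∧
  ηl.measure {s : ℝ | 0 ≤ s ∧ l s < φ s} = 0 ∧
  ηr.measure {s : ℝ | 0 ≤ s ∧ φ s < r s} = 0

/-- `(φ, η)` solves the Skorokhod problem on `[ℓ(·), r(·)]` for `ψ`. -/
def SP (l r ψ φ η : ℝ → ℝ) : Prop :=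
  ∃ ηl ηr : StieltjesFunction ℝ, SPwith l r ψ φ η ηl ηr

/-- The explicit functional
`Ξ_{ℓ,r}(ψ)(t) = max( (ψ(0)-r(0))⁺ ∧ inf_{u∈[0,t]}(ψ(u)-ℓ(u)),
  sup_{s∈[0,t]} [ (ψ(s)-r(s)) ∧ inf_{u∈[s,t]}(ψ(u)-ℓ(u)) ] )`. -/
noncomputable def Xi (l r ψ : ℝ → ℝ) (t : ℝ) : ℝ :=
  max (min (max (ψ 0 - r 0) 0) (sInf ((fun u => ψ u - l u) '' Set.Icc 0 t)))
      (sSup ((fun s => min (ψ s - r s) (sInf ((fun u => ψ u - l u) '' Set.Icc s t)))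
        '' Set.Icc 0 t))

/-- `f` is piecewise constant on `[0, ∞)` with finitely many jumps: there is a finite
set `S` of jump times off which `f` is locally constant. -/
def PiecewiseConstant (f : ℝ → ℝ) : Prop :=
  ∃ S : Finset ℝ, ∀ s t : ℝ, 0 ≤ s → s ≤ t → (∀ u ∈ Set.Ioc s t, u ∉ S) → f t = f s


section AuxESP



variable {S : Finset ℝ} {a b f : ℝ → ℝ}

def PCon (S : Finset ℝ) (f : ℝ → ℝ) : Prop :=
  ∀ s t : ℝ, 0 ≤ s → s ≤ t → (∀ u ∈ Set.Ioc s t, u ∉ S) → f t = f s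

lemma pc_eq_max (hf : PCon S f) {s u : ℝ} (hs : 0 ≤ s) (hsu : s ≤ u) :
    ∃ v, s ≤ v ∧ v ≤ u ∧ (v = s ∨ v ∈ S) ∧ f u = f v := by
  classical
  set G : Finset ℝ := insert s (S.filter (fun p => s < p ∧ p ≤ u)) with hG
  have hne : G.Nonempty := ⟨s, Finset.mem_insert_self _ _⟩
  set v := G.max' hne with hv
  have hvG : v ∈ G := G.max'_mem hne
  have hsv : s ≤ v := Finset.le_max' _ _ (Finset.mem_insert_self _ _)
  have hvu : v ≤ u := by
    rcases Finset.mem_insert.1 hvG with h | h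
    · exact h ▸ hsu
    · exact (Finset.mem_filter.1 h).2.2
  refine ⟨v, hsv, hvu, ?_, ?_⟩
  · rcases Finset.mem_insert.1 hvG with h | h
    · exact Or.inl h
    · exact Or.inr (Finset.mem_filter.1 h).1
  · refine hf v u (le_trans hs hsv) hvu ?_
    intro p hp hpS
    have : p ∈ G := by
      refine Finset.mem_insert_of_mem (Finset.mem_filter.2 ⟨hpS, lt_of_le_of_lt hsv hp.1, hp.2⟩)
    exact absurd (Finset.le_max' _ _ this) (not_le.2 hp.1)

lemma pc_image_finite (hf : PCon S f) {s t : ℝ} (hs : 0 ≤ s) :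
    (f '' Set.Icc s t).Finite := by
  refine Set.Finite.subset ((S.finite_toSet.insert s).image f) ?_
  rintro _ ⟨u, hu, rfl⟩
  obtain ⟨v, hsv, hvu, hvmem, hfu⟩ := pc_eq_max hf hs hu.1
  exact ⟨v, by simpa using hvmem, hfu.symm⟩

lemma csSup_image_min {g : ℝ → ℝ} {A : Set ℝ} (hne : A.Nonempty)
    (hbdd : BddAbove (g '' A)) (K : ℝ) :
    sSup ((fun u => min (g u) K) '' A) = min (sSup (g '' A)) K := by
  have hbdd' : BddAbove ((fun u => min (g u) K) '' A) := by
    refine ⟨K, ?_⟩; rintro _ ⟨u, hu, rfl⟩; exact min_le_right _ _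
  apply le_antisymm
  · refine csSup_le (hne.image _) ?_
    rintro _ ⟨u, hu, rfl⟩
    exact min_le_min (le_csSup hbdd ⟨u, hu, rfl⟩) le_rfl
  · rcases le_or_gt (sSup (g '' A)) K with h | h
    · rw [min_eq_left h]
      refine csSup_le (hne.image _) ?_
      rintro _ ⟨u, hu, rfl⟩
      have hguK : g u ≤ K := le_trans (le_csSup hbdd ⟨u, hu, rfl⟩) h
      calc g u = min (g u) K := (min_eq_left hguK).symm
        _ ≤ _ := le_csSup hbdd' ⟨u, hu, rfl⟩
    · rw [min_eq_right h.le]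
      obtain ⟨_, ⟨u, hu, rfl⟩, hKx⟩ := exists_lt_of_lt_csSup (hne.image g) h
      calc K = min (g u) K := (min_eq_right hKx.le).symm
        _ ≤ _ := le_csSup hbdd' ⟨u, hu, rfl⟩

noncomputable def XiAB (a b : ℝ → ℝ) (t : ℝ) : ℝ :=
  max (min (max (b 0) 0) (sInf (a '' Set.Icc 0 t)))
      (sSup ((fun s => min (b s) (sInf (a '' Set.Icc s t))) '' Set.Icc 0 t))

lemma inf_le_apply (ha : PCon S a) {s t u : ℝ} (hs : 0 ≤ s) (hu : u ∈ Set.Icc s t) :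
    sInf (a '' Set.Icc s t) ≤ a u :=
  csInf_le (pc_image_finite ha hs).bddBelow ⟨u, hu, rfl⟩

lemma g_bddAbove (ha : PCon S a) {c t : ℝ} (hct : c ≤ t) :
    BddAbove ((fun u => min (b u) (sInf (a '' Set.Icc u t))) '' Set.Icc 0 c) := by
  refine ⟨a t, ?_⟩
  rintro _ ⟨u, hu, rfl⟩
  exact le_trans (min_le_right _ _)
    (inf_le_apply ha hu.1 ⟨le_trans hu.2 hct, le_rfl⟩)

lemma xiAB_bounds (ha : PCon S a) (hba : ∀ u, 0 ≤ u → b u ≤ a u) {t : ℝ} (ht : 0 ≤ t) :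
    b t ≤ XiAB a b t ∧ XiAB a b t ≤ a t := by
  have htt : t ∈ Set.Icc 0 t := ⟨ht, le_rfl⟩
  constructor
  · have h1 : (fun u => min (b u) (sInf (a '' Set.Icc u t))) t
        = min (b t) (sInf (a '' Set.Icc t t)) := rfl
    have h2 : sInf (a '' Set.Icc t t) = a t := by
      rw [Set.Icc_self, Set.image_singleton, csInf_singleton]
    have : b t ≤ sSup ((fun u => min (b u) (sInf (a '' Set.Icc u t))) '' Set.Icc 0 t) := by
      refine le_trans ?_ (le_csSup (g_bddAbove ha le_rfl) ⟨t, htt, rfl⟩)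
      rw [h1, h2, min_eq_left (hba t ht)]
    exact le_trans this (le_max_right _ _)
  · apply max_le
    · exact le_trans (min_le_right _ _) (inf_le_apply ha le_rfl htt)
    · refine csSup_le ((Set.nonempty_Icc.2 ht).image _) ?_
      rintro _ ⟨u, hu, rfl⟩
      exact le_trans (min_le_right _ _) (inf_le_apply ha hu.1 ⟨hu.2, le_rfl⟩)

lemma pair_image (ha : PCon S a) {s t u : ℝ} (hs : 0 ≤ s) (hsu : s ≤ u) (hut : u < t)
    (hc : ∀ w, s ≤ w → w < t → a w = a s) :
    a '' Set.Icc u t = {a s, a t} := by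
  ext x
  constructor
  · rintro ⟨w, hw, rfl⟩
    rcases eq_or_lt_of_le hw.2 with h | h
    · exact Or.inr (Set.mem_singleton_iff.2 (by rw [h]))
    · exact Or.inl (hc w (le_trans hsu hw.1) h)
  · rintro (h | h)
    · exact ⟨u, ⟨le_rfl, hut.le⟩, by rw [h, hc u hsu hut]⟩
    · exact ⟨t, ⟨hut.le, le_rfl⟩, by rw [h]⟩

lemma lat_identity (A B C K D : ℝ) (hC : C ≤ max A B) :
    max (min A K) (max (min B K) (max (min C K) D)) = max D (min (max A B) K) := by
  have h1 : min (max A B) K = max (min A K) (min B K) := min_max_distrib_right ..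
  have h2 : min C K ≤ max (min A K) (min B K) := by
    rw [← h1]; exact min_le_min hC le_rfl
  rw [h1]
  apply le_antisymm
  · refine max_le (le_trans (le_max_left _ _) (le_max_right D _)) (max_le
      (le_trans (le_max_right _ _) (le_max_right D _)) (max_le
      (le_trans h2 (le_max_right D _)) (le_max_left D _)))
  · refine max_le (le_trans (le_max_right _ _) (le_trans (le_max_right _ _)
      (le_max_right _ _))) (max_le (le_max_left _ _) (le_trans (le_max_left _ _)
      (le_max_right _ _)))

lemma xiAB_step (ha : PCon S a) (hb : PCon S b) (hba : ∀ u, 0 ≤ u → b u ≤ a u)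
    {s t : ℝ} (hs : 0 ≤ s) (hst : s < t)
    (hc : ∀ u, s ≤ u → u < t → a u = a s ∧ b u = b s) :
    XiAB a b t = max (b t) (min (XiAB a b s) (a t)) := by
  have ht : 0 ≤ t := le_trans hs hst.le
  have hca : ∀ w, s ≤ w → w < t → a w = a s := fun w h1 h2 => (hc w h1 h2).1
  -- key : for u ∈ [0,s], sInf (a '' Icc u t) = min (sInf (a '' Icc u s)) (a t)
  have key : ∀ u : ℝ, 0 ≤ u → u ≤ s →
      sInf (a '' Set.Icc u t) = min (sInf (a '' Set.Icc u s)) (a t) := by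
    intro u hu hus
    have hsplit : Set.Icc u t = Set.Icc u s ∪ Set.Icc s t :=
      (Set.Icc_union_Icc_eq_Icc hus hst.le).symm
    have hpair : a '' Set.Icc s t = {a s, a t} := pair_image ha hs le_rfl hst hca
    have hunion : a '' Set.Icc u s ∪ ({a s, a t} : Set ℝ) = a '' Set.Icc u s ∪ {a t} := by
      apply Set.Subset.antisymm
      · rintro x (h | h)
        · exact Or.inl h
        · rcases h with h | h
          · exact Or.inl ⟨s, ⟨hus, le_rfl⟩, h.symm⟩
          · exact Or.inr h
      · rintro x (h | h)
        · exact Or.inl h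
        · exact Or.inr (Or.inr h)
    rw [hsplit, Set.image_union, hpair, hunion,
      csInf_union (pc_image_finite ha hu).bddBelow ((Set.nonempty_Icc.2 hus).image _)
        (Set.finite_singleton _).bddBelow (Set.singleton_nonempty _), csInf_singleton]
  -- the sup over [s,t] part
  have himg_st : (fun u => min (b u) (sInf (a '' Set.Icc u t))) '' Set.Icc s t
      = {min (b s) (a t), b t} := by
    have gt_t : min (b t) (sInf (a '' Set.Icc t t)) = b t := by
      rw [Set.Icc_self, Set.image_singleton, csInf_singleton, min_eq_left (hba t ht)]
    have gt_mid : ∀ u, s ≤ u → u < t →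
        min (b u) (sInf (a '' Set.Icc u t)) = min (b s) (a t) := by
      intro u h1 h2
      rw [pair_image ha hs h1 h2 hca, csInf_pair, (hc u h1 h2).2, ← min_assoc,
        min_eq_left (hba s hs)]
    ext x
    simp only [Set.mem_image, Set.mem_insert_iff, Set.mem_singleton_iff]
    constructor
    · rintro ⟨u, hu, rfl⟩
      rcases eq_or_lt_of_le hu.2 with h | h
      · exact Or.inr (by rw [h, gt_t])
      · exact Or.inl (gt_mid u hu.1 h)
    · rintro (h | h)
      · exact ⟨s, ⟨le_rfl, hst.le⟩, by rw [gt_mid s le_rfl hst, h]⟩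
      · exact ⟨t, ⟨hst.le, le_rfl⟩, by rw [gt_t, h]⟩
  -- the sup over [0,s] part
  have himg_0s : (fun u => min (b u) (sInf (a '' Set.Icc u t))) '' Set.Icc 0 s
      = (fun u => min (min (b u) (sInf (a '' Set.Icc u s))) (a t)) '' Set.Icc 0 s := by
    apply Set.image_congr
    intro u hu
    rw [key u hu.1 hu.2, min_assoc]
  have hsplit : Set.Icc 0 t = Set.Icc 0 s ∪ Set.Icc s t :=
    (Set.Icc_union_Icc_eq_Icc hs hst.le).symm
  have hmin := csSup_image_min (g := fun u => min (b u) (sInf (a '' Set.Icc u s)))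
    (Set.nonempty_Icc.2 hs) (g_bddAbove ha le_rfl) (a t)
  have hsup : sSup ((fun u => min (b u) (sInf (a '' Set.Icc u t))) '' Set.Icc 0 t)
      = max (min (sSup ((fun u => min (b u) (sInf (a '' Set.Icc u s))) '' Set.Icc 0 s)) (a t))
            (max (min (b s) (a t)) (b t)) := by
    rw [hsplit, Set.image_union, himg_st,
      csSup_union (g_bddAbove ha hst.le) ((Set.nonempty_Icc.2 hs).image _)
        ((Set.finite_singleton _).insert _).bddAbove ⟨_, Set.mem_insert _ _⟩,
      himg_0s, hmin, csSup_pair]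
  have hM0 : min (max (b 0) 0) (sInf (a '' Set.Icc 0 t))
      = min (min (max (b 0) 0) (sInf (a '' Set.Icc 0 s))) (a t) := by
    rw [key 0 le_rfl hs, min_assoc]
  have hbX : b s ≤ XiAB a b s := (xiAB_bounds ha hba hs).1
  have hXs : XiAB a b s = max (min (max (b 0) 0) (sInf (a '' Set.Icc 0 s)))
      (sSup ((fun u => min (b u) (sInf (a '' Set.Icc u s))) '' Set.Icc 0 s)) := rfl
  show max _ _ = _
  rw [hsup, hM0, hXs]
  rw [hXs] at hbX
  exact lat_identity _ _ _ _ _ hbX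

lemma xiAB_const (ha : PCon S a) (hb : PCon S b) (hba : ∀ u, 0 ≤ u → b u ≤ a u)
    {s t : ℝ} (hs : 0 ≤ s) (hst : s ≤ t)
    (hc : ∀ u, s ≤ u → u ≤ t → a u = a s ∧ b u = b s) :
    XiAB a b t = XiAB a b s := by
  rcases eq_or_lt_of_le hst with h | h
  · rw [← h]
  · rw [xiAB_step ha hb hba hs h (fun u h1 h2 => hc u h1 h2.le),
      (hc t hst le_rfl).1, (hc t hst le_rfl).2]
    obtain ⟨h1, h2⟩ := xiAB_bounds ha hba hs
    rw [min_eq_left h2, max_eq_right h1]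

lemma xiAB_nojump (ha : PCon S a) (hb : PCon S b) (hba : ∀ u, 0 ≤ u → b u ≤ a u)
    {s t : ℝ} (hs : 0 ≤ s) (hst : s ≤ t)
    (hno : ∀ u ∈ Set.Ioc s t, u ∉ S) :
    XiAB a b t = XiAB a b s := by
  refine xiAB_const ha hb hba hs hst ?_
  intro u h1 h2
  rcases eq_or_lt_of_le h1 with h | h
  · rw [← h]; exact ⟨rfl, rfl⟩
  · exact ⟨ha s u hs h1 (fun w hw => hno w ⟨hw.1, le_trans hw.2 h2⟩),
      hb s u hs h1 (fun w hw => hno w ⟨hw.1, le_trans hw.2 h2⟩)⟩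

open Classical in
lemma xiAB_up (ha : PCon S a) (hb : PCon S b) (hba : ∀ u, 0 ≤ u → b u ≤ a u) :
    ∀ n : ℕ, ∀ s t : ℝ, 0 ≤ s → s ≤ t →
      (S.filter (fun p => s < p ∧ p ≤ t)).card ≤ n →
      (∀ u, s < u → u ≤ t → b u < XiAB a b u) → XiAB a b t ≤ XiAB a b s := by
  intro n
  induction n with
  | zero =>
    intro s t hs hst hcard _
    have hempty : ∀ u ∈ Set.Ioc s t, u ∉ S := by
      intro u hu huS
      have hm : u ∈ S.filter (fun p => s < p ∧ p ≤ t) :=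
        Finset.mem_filter.2 ⟨huS, hu.1, hu.2⟩
      have := Finset.card_pos.2 ⟨u, hm⟩
      omega
    exact le_of_eq (xiAB_nojump ha hb hba hs hst hempty)
  | succ n ih =>
    intro s t hs hst hcard hlt
    rcases (S.filter (fun p => s < p ∧ p ≤ t)).eq_empty_or_nonempty with hF | hF
    · have hempty : ∀ u ∈ Set.Ioc s t, u ∉ S := by
        intro u hu huS
        exact Finset.eq_empty_iff_forall_notMem.1 hF u
          (Finset.mem_filter.2 ⟨huS, hu.1, hu.2⟩)
      exact le_of_eq (xiAB_nojump ha hb hba hs hst hempty)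
    · set F := S.filter (fun p => s < p ∧ p ≤ t) with hFdef
      set u₀ := F.max' hF with hu₀def
      have hu₀F : u₀ ∈ F := F.max'_mem hF
      have hu₀S : u₀ ∈ S := (Finset.mem_filter.1 hu₀F).1
      have hsu₀ : s < u₀ := (Finset.mem_filter.1 hu₀F).2.1
      have hu₀t : u₀ ≤ t := (Finset.mem_filter.1 hu₀F).2.2
      have hu₀0 : 0 ≤ u₀ := le_trans hs hsu₀.le
      have h1 : XiAB a b t = XiAB a b u₀ := by
        refine xiAB_nojump ha hb hba hu₀0 hu₀t ?_
        intro p hp hpS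
        have hpF : p ∈ F := Finset.mem_filter.2 ⟨hpS, lt_trans hsu₀ hp.1, hp.2⟩
        exact absurd (F.le_max' p hpF) (not_le.2 hp.1)
      set G : Finset ℝ := insert s (S.filter (fun p => s < p ∧ p < u₀)) with hGdef
      have hGne : G.Nonempty := ⟨s, Finset.mem_insert_self _ _⟩
      set m := G.max' hGne with hmdef
      have hsm : s ≤ m := Finset.le_max' _ _ (Finset.mem_insert_self _ _)
      have hm0 : 0 ≤ m := le_trans hs hsm
      have hmu₀ : m < u₀ := by
        refine (Finset.max'_lt_iff _ hGne).2 ?_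
        intro p hp
        rcases Finset.mem_insert.1 hp with h | h
        · exact h ▸ hsu₀
        · exact (Finset.mem_filter.1 h).2.2
      have hnoG : ∀ u, m ≤ u → u < u₀ → a u = a m ∧ b u = b m := by
        intro u h1' h2'
        have hno : ∀ w ∈ Set.Ioc m u, w ∉ S := by
          intro w hw hwS
          have : w ∈ G := Finset.mem_insert_of_mem
            (Finset.mem_filter.2 ⟨hwS, lt_of_le_of_lt hsm hw.1,
              lt_of_le_of_lt hw.2 h2'⟩)
          exact absurd (Finset.le_max' _ _ this) (not_le.2 hw.1)
        exact ⟨ha m u hm0 h1' hno, hb m u hm0 h1' hno⟩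
      have hrec : XiAB a b u₀ = max (b u₀) (min (XiAB a b m) (a u₀)) :=
        xiAB_step ha hb hba hm0 hmu₀ hnoG
      have hblt : b u₀ < XiAB a b u₀ := hlt u₀ hsu₀ hu₀t
      have hbc : b u₀ ≤ min (XiAB a b m) (a u₀) := by
        by_contra hcon
        push_neg at hcon
        rw [hrec, max_eq_left hcon.le] at hblt
        exact lt_irrefl _ hblt
      have hXu₀ : XiAB a b u₀ ≤ XiAB a b m := by
        rw [hrec, max_eq_right hbc]
        exact min_le_left _ _
      have hcard' : (S.filter (fun p => s < p ∧ p ≤ m)).card ≤ n := by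
        have hsub : S.filter (fun p => s < p ∧ p ≤ m) ⊆ F.erase u₀ := by
          intro p hp
          obtain ⟨hpS, hsp, hpm⟩ := Finset.mem_filter.1 hp
          refine Finset.mem_erase.2 ⟨ne_of_lt (lt_of_le_of_lt hpm hmu₀), ?_⟩
          exact Finset.mem_filter.2 ⟨hpS, hsp, le_trans hpm (le_trans hmu₀.le hu₀t)⟩
        have h2 := Finset.card_le_card hsub
        rw [Finset.card_erase_of_mem hu₀F] at h2
        omega
      have hXm : XiAB a b m ≤ XiAB a b s :=
        ih s m hs hsm hcard'
          (fun u hu1 hu2 => hlt u hu1 (le_trans hu2 (le_trans hmu₀.le hu₀t)))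
      linarith [h1]

open Classical in
lemma xiAB_down (ha : PCon S a) (hb : PCon S b) (hba : ∀ u, 0 ≤ u → b u ≤ a u) :
    ∀ n : ℕ, ∀ s t : ℝ, 0 ≤ s → s ≤ t →
      (S.filter (fun p => s < p ∧ p ≤ t)).card ≤ n →
      (∀ u, s < u → u ≤ t → XiAB a b u < a u) → XiAB a b s ≤ XiAB a b t := by
  intro n
  induction n with
  | zero =>
    intro s t hs hst hcard _
    have hempty : ∀ u ∈ Set.Ioc s t, u ∉ S := by
      intro u hu huS
      have hm : u ∈ S.filter (fun p => s < p ∧ p ≤ t) :=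
        Finset.mem_filter.2 ⟨huS, hu.1, hu.2⟩
      have := Finset.card_pos.2 ⟨u, hm⟩
      omega
    exact ge_of_eq (xiAB_nojump ha hb hba hs hst hempty)
  | succ n ih =>
    intro s t hs hst hcard hlt
    rcases (S.filter (fun p => s < p ∧ p ≤ t)).eq_empty_or_nonempty with hF | hF
    · have hempty : ∀ u ∈ Set.Ioc s t, u ∉ S := by
        intro u hu huS
        exact Finset.eq_empty_iff_forall_notMem.1 hF u
          (Finset.mem_filter.2 ⟨huS, hu.1, hu.2⟩)
      exact ge_of_eq (xiAB_nojump ha hb hba hs hst hempty)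
    · set F := S.filter (fun p => s < p ∧ p ≤ t) with hFdef
      set u₀ := F.max' hF with hu₀def
      have hu₀F : u₀ ∈ F := F.max'_mem hF
      have hu₀S : u₀ ∈ S := (Finset.mem_filter.1 hu₀F).1
      have hsu₀ : s < u₀ := (Finset.mem_filter.1 hu₀F).2.1
      have hu₀t : u₀ ≤ t := (Finset.mem_filter.1 hu₀F).2.2
      have hu₀0 : 0 ≤ u₀ := le_trans hs hsu₀.le
      have h1 : XiAB a b t = XiAB a b u₀ := by
        refine xiAB_nojump ha hb hba hu₀0 hu₀t ?_
        intro p hp hpS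
        have hpF : p ∈ F := Finset.mem_filter.2 ⟨hpS, lt_trans hsu₀ hp.1, hp.2⟩
        exact absurd (F.le_max' p hpF) (not_le.2 hp.1)
      set G : Finset ℝ := insert s (S.filter (fun p => s < p ∧ p < u₀)) with hGdef
      have hGne : G.Nonempty := ⟨s, Finset.mem_insert_self _ _⟩
      set m := G.max' hGne with hmdef
      have hsm : s ≤ m := Finset.le_max' _ _ (Finset.mem_insert_self _ _)
      have hm0 : 0 ≤ m := le_trans hs hsm
      have hmu₀ : m < u₀ := by
        refine (Finset.max'_lt_iff _ hGne).2 ?_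
        intro p hp
        rcases Finset.mem_insert.1 hp with h | h
        · exact h ▸ hsu₀
        · exact (Finset.mem_filter.1 h).2.2
      have hnoG : ∀ u, m ≤ u → u < u₀ → a u = a m ∧ b u = b m := by
        intro u h1' h2'
        have hno : ∀ w ∈ Set.Ioc m u, w ∉ S := by
          intro w hw hwS
          have : w ∈ G := Finset.mem_insert_of_mem
            (Finset.mem_filter.2 ⟨hwS, lt_of_le_of_lt hsm hw.1,
              lt_of_le_of_lt hw.2 h2'⟩)
          exact absurd (Finset.le_max' _ _ this) (not_le.2 hw.1)
        exact ⟨ha m u hm0 h1' hno, hb m u hm0 h1' hno⟩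
      have hrec : XiAB a b u₀ = max (b u₀) (min (XiAB a b m) (a u₀)) :=
        xiAB_step ha hb hba hm0 hmu₀ hnoG
      have halt : XiAB a b u₀ < a u₀ := hlt u₀ hsu₀ hu₀t
      have h2 : min (XiAB a b m) (a u₀) ≤ XiAB a b u₀ := by
        rw [hrec]; exact le_max_right _ _
      have hXu₀ : XiAB a b m ≤ XiAB a b u₀ := by
        rcases le_total (XiAB a b m) (a u₀) with h | h
        · rw [min_eq_left h] at h2; exact h2
        · rw [min_eq_right h] at h2; linarith
      have hcard' : (S.filter (fun p => s < p ∧ p ≤ m)).card ≤ n := by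
        have hsub : S.filter (fun p => s < p ∧ p ≤ m) ⊆ F.erase u₀ := by
          intro p hp
          obtain ⟨hpS, hsp, hpm⟩ := Finset.mem_filter.1 hp
          refine Finset.mem_erase.2 ⟨ne_of_lt (lt_of_le_of_lt hpm hmu₀), ?_⟩
          exact Finset.mem_filter.2 ⟨hpS, hsp, le_trans hpm (le_trans hmu₀.le hu₀t)⟩
        have h2 := Finset.card_le_card hsub
        rw [Finset.card_erase_of_mem hu₀F] at h2
        omega
      have hXm : XiAB a b s ≤ XiAB a b m :=
        ih s m hs hsm hcard'
          (fun u hu1 hu2 => hlt u hu1 (le_trans hu2 (le_trans hmu₀.le hu₀t)))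
      linarith [h1]

lemma xiAB_zero (hba : ∀ u, 0 ≤ u → b u ≤ a u) :
    XiAB a b 0 = max (min (max (b 0) 0) (a 0)) (b 0) := by
  show max (min (max (b 0) 0) (sInf (a '' Set.Icc 0 0)))
      (sSup ((fun s => min (b s) (sInf (a '' Set.Icc s 0))) '' Set.Icc 0 0)) = _
  rw [Set.Icc_self]
  simp only [Set.image_singleton, csSup_singleton, Set.Icc_self, csInf_singleton]
  rw [min_eq_left (hba 0 le_rfl)]

end AuxESP

/-- For piecewise constant càdlàg `ℓ ≤ r` and `ψ`, each with finitely many jumps,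
the pair `(ψ - Ξ_{ℓ,r}(ψ), -Ξ_{ℓ,r}(ψ))` solves the extended Skorokhod problem on
`[ℓ(·), r(·)]` for `ψ`. -/
theorem esp_piecewise_constant (l r ψ : ℝ → ℝ)
    (hl : Cadlag l) (hr : Cadlag r) (hlr : ∀ t : ℝ, 0 ≤ t → l t ≤ r t)
    (hψ : Cadlag ψ)
    (hlpc : PiecewiseConstant l) (hrpc : PiecewiseConstant r)
    (hψpc : PiecewiseConstant ψ) :
    ESP l r ψ (fun t => ψ t - Xi l r ψ t) (fun t => -Xi l r ψ t) := by
  classical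
  obtain ⟨Sl, hSl⟩ := hlpc
  obtain ⟨Sr, hSr⟩ := hrpc
  obtain ⟨Sψ, hSψ⟩ := hψpc
  set S : Finset ℝ := Sl ∪ Sr ∪ Sψ with hSdef
  set a : ℝ → ℝ := fun u => ψ u - l u with hadef
  set b : ℝ → ℝ := fun u => ψ u - r u with hbdef
  have hnotmem : ∀ u : ℝ, u ∉ S → u ∉ Sl ∧ u ∉ Sr ∧ u ∉ Sψ := by
    intro u hu
    simp only [hSdef, Finset.mem_union, not_or] at hu
    exact ⟨hu.1.1, hu.1.2, hu.2⟩
  have ha : PCon S a := by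
    intro s t h1 h2 h3
    have h4 : ∀ u ∈ Set.Ioc s t, u ∉ Sl := fun u hu => (hnotmem u (h3 u hu)).1
    have h5 : ∀ u ∈ Set.Ioc s t, u ∉ Sψ := fun u hu => (hnotmem u (h3 u hu)).2.2
    show ψ t - l t = ψ s - l s
    rw [hSl s t h1 h2 h4, hSψ s t h1 h2 h5]
  have hb : PCon S b := by
    intro s t h1 h2 h3
    have h4 : ∀ u ∈ Set.Ioc s t, u ∉ Sr := fun u hu => (hnotmem u (h3 u hu)).2.1
    have h5 : ∀ u ∈ Set.Ioc s t, u ∉ Sψ := fun u hu => (hnotmem u (h3 u hu)).2.2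
    show ψ t - r t = ψ s - r s
    rw [hSr s t h1 h2 h4, hSψ s t h1 h2 h5]
  have hba : ∀ u, 0 ≤ u → b u ≤ a u := by
    intro u hu
    show ψ u - r u ≤ ψ u - l u
    linarith [hlr u hu]
  have hXi : ∀ t : ℝ, Xi l r ψ t = XiAB a b t := fun _ => rfl
  refine ⟨?_, ?_, ?_, ?_, ?_⟩
  · -- bounds
    intro t ht
    obtain ⟨hb1, hb2⟩ := xiAB_bounds ha hba ht
    have hx := hXi t
    have hat : a t = ψ t - l t := rfl
    have hbt : b t = ψ t - r t := rfl
    refine ⟨by show ψ t - Xi l r ψ t = ψ t + -Xi l r ψ t; ring, ?_, ?_⟩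
    · show l t ≤ ψ t - Xi l r ψ t
      linarith
    · show ψ t - Xi l r ψ t ≤ r t
      linarith
  · -- monotone when below upper barrier: η s ≤ η t
    intro s t hs hst hcond
    have hkey : XiAB a b t ≤ XiAB a b s := by
      refine xiAB_up ha hb hba (S.filter (fun p => s < p ∧ p ≤ t)).card s t hs hst le_rfl ?_
      intro u h1 h2
      have h3 : ψ u - Xi l r ψ u < r u := hcond u h1 h2
      have hbu : b u = ψ u - r u := rfl
      have hxu := hXi u
      linarith
    show -Xi l r ψ s ≤ -Xi l r ψ t
    have := hXi s; have := hXi t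
    linarith
  · -- monotone when above lower barrier: η t ≤ η s
    intro s t hs hst hcond
    have hkey : XiAB a b s ≤ XiAB a b t := by
      refine xiAB_down ha hb hba (S.filter (fun p => s < p ∧ p ≤ t)).card s t hs hst le_rfl ?_
      intro u h1 h2
      have h3 : l u < ψ u - Xi l r ψ u := hcond u h1 h2
      have hau : a u = ψ u - l u := rfl
      have hxu := hXi u
      linarith
    show -Xi l r ψ t ≤ -Xi l r ψ s
    have := hXi s; have := hXi t
    linarith
  · -- left limits
    intro t ht
    set F : Finset ℝ := insert (t/2) (S.filter (fun p => t/2 < p ∧ p < t)) with hFdef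
    have hFne : F.Nonempty := ⟨t/2, Finset.mem_insert_self _ _⟩
    set m := F.max' hFne with hmdef
    have ht2 : 0 < t/2 := by linarith
    have hm2 : t/2 ≤ m := Finset.le_max' _ _ (Finset.mem_insert_self _ _)
    have hm0 : 0 ≤ m := by linarith
    have hmt : m < t := by
      refine (Finset.max'_lt_iff _ hFne).2 ?_
      intro p hp
      rcases Finset.mem_insert.1 hp with h | h
      · rw [h]; linarith
      · exact (Finset.mem_filter.1 h).2.2
    have hconst : ∀ u, m ≤ u → u < t → a u = a m ∧ b u = b m := by
      intro u h1 h2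
      have hno : ∀ w ∈ Set.Ioc m u, w ∉ S := by
        intro w hw hwS
        have : w ∈ F := Finset.mem_insert_of_mem
          (Finset.mem_filter.2 ⟨hwS, lt_of_le_of_lt hm2 hw.1, lt_of_le_of_lt hw.2 h2⟩)
        exact absurd (Finset.le_max' _ _ this) (not_le.2 hw.1)
      exact ⟨ha m u hm0 h1 hno, hb m u hm0 h1 hno⟩
    have hstep := xiAB_step ha hb hba hm0 hmt hconst
    have hleft : Function.leftLim (fun u => -Xi l r ψ u) t = -XiAB a b m := by
      apply leftLim_eq_of_tendsto
      · have hmem : Set.Ioo m t ∈ nhdsWithin t (Set.Iio t) := Ioo_mem_nhdsLT_of_mem ⟨hmt, le_rfl⟩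
        refine Filter.Tendsto.congr' ?_ tendsto_const_nhds
        refine Filter.eventuallyEq_of_mem hmem ?_
        intro u hu
        have hu' : XiAB a b u = XiAB a b m := xiAB_const ha hb hba hm0 hu.1.le
          (fun w h1 h2 => hconst w h1 (lt_of_le_of_lt h2 hu.2))
        show -XiAB a b m = -Xi l r ψ u
        rw [hXi u, hu']
    constructor
    · intro hcond
      have hcond' : ψ t - Xi l r ψ t < r t := hcond
      have hxt := hXi t
      have hbt : b t = ψ t - r t := rfl
      have hblt : b t < XiAB a b t := by linarith
      have hbc : b t ≤ min (XiAB a b m) (a t) := by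
        by_contra hcon
        push_neg at hcon
        rw [hstep, max_eq_left hcon.le] at hblt
        exact lt_irrefl _ hblt
      have hle : XiAB a b t ≤ XiAB a b m := by
        rw [hstep, max_eq_right hbc]; exact min_le_left _ _
      show Function.leftLim (fun u => -Xi l r ψ u) t ≤ -Xi l r ψ t
      rw [hleft]; linarith
    · intro hcond
      have hcond' : l t < ψ t - Xi l r ψ t := hcond
      have hxt := hXi t
      have hat : a t = ψ t - l t := rfl
      have halt : XiAB a b t < a t := by linarith
      have h2 : min (XiAB a b m) (a t) ≤ XiAB a b t := by
        rw [hstep]; exact le_max_right _ _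
      have hge : XiAB a b m ≤ XiAB a b t := by
        rcases le_total (XiAB a b m) (a t) with h | h
        · rw [min_eq_left h] at h2; exact h2
        · rw [min_eq_right h] at h2; linarith
      show -Xi l r ψ t ≤ Function.leftLim (fun u => -Xi l r ψ u) t
      rw [hleft]; linarith
  · -- time zero
    have h0 := xiAB_zero (a := a) (b := b) hba
    have hb0 : b 0 = ψ 0 - r 0 := rfl
    have ha0 : a 0 = ψ 0 - l 0 := rfl
    have hx0 := hXi 0
    constructor
    · intro hcond
      have hcond' : ψ 0 - Xi l r ψ 0 < r 0 := hcond
      show (0:ℝ) ≤ -Xi l r ψ 0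
      rcases le_or_gt 0 (b 0) with hc | hc
      · exfalso
        have : XiAB a b 0 = b 0 := by
          rw [h0, max_eq_left hc, min_eq_left (hba 0 le_rfl), max_self]
        linarith
      · have hle : XiAB a b 0 ≤ 0 := by
          rw [h0, max_eq_right hc.le]
          exact max_le (min_le_left _ _) hc.le
        linarith
    · intro hcond
      have hcond' : l 0 < ψ 0 - Xi l r ψ 0 := hcond
      show -Xi l r ψ 0 ≤ 0
      have halt : XiAB a b 0 < a 0 := by linarith
      have h2 : min (max (b 0) 0) (a 0) ≤ XiAB a b 0 := by
        rw [h0]; exact le_max_left _ _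
      rcases le_total (max (b 0) 0) (a 0) with h | h
      · rw [min_eq_left h] at h2
        have h3 : (0:ℝ) ≤ max (b 0) 0 := le_max_right _ _
        linarith
      · rw [min_eq_right h] at h2
        linarith
end

section
/- Monotonicity of constraining processes with respect to the domain: suppose ℓ̃ ≤ ℓ ≤ r ≤ r̃ are càdlàg with inf_t (r(t) − ℓ(t)) > 0. For any càdlàg ψ, let (η_ℓ, η_r) and (η_{ℓ̃}, η_{r̃}) be the constraining processes of the Skorokhod problems on [ℓ(·), r(·)] and [ℓ̃(·), r̃(·)] respectively. Then η_r(t) ≥ η_{r̃}(t) and η_ℓ(t) ≥ η_{ℓ̃}(t) for every t ≥ 0. -/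
open Set Filter

/-- A Stieltjes function vanishing on negatives gives no mass to `Iio 0`. -/
private lemma neg_null (g : StieltjesFunction ℝ) (h : ∀ s : ℝ, s < 0 → g s = 0) :
    g.measure (Set.Iio 0) = 0 := by
  have hsub : Set.Iio (0:ℝ) ⊆ ⋃ n : ℕ, Set.Ioc (-((n:ℝ)+1)) (-(1/((n:ℝ)+1))) := by
    intro x hx
    have hx0 : x < 0 := hx
    obtain ⟨n, hn⟩ := exists_nat_gt (max (-x) (1/(-x)))
    have h1 : -x < n := lt_of_le_of_lt (le_max_left _ _) hn
    have h2 : 1/(-x) < n := lt_of_le_of_lt (le_max_right _ _) hn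
    have hxpos : (0:ℝ) < -x := by linarith
    have hn1 : (0:ℝ) < (n:ℝ)+1 := by positivity
    have key : 1/((n:ℝ)+1) < -x := by
      rw [div_lt_iff₀ hn1]
      rw [div_lt_iff₀ hxpos] at h2
      nlinarith
    refine Set.mem_iUnion.2 ⟨n, ?_⟩
    simp only [Set.mem_Ioc]
    constructor <;> linarith
  refine MeasureTheory.measure_mono_null hsub (MeasureTheory.measure_iUnion_null fun n => ?_)
  have ha : (-((n:ℝ)+1)) < 0 := by
    have : (0:ℝ) < (n:ℝ)+1 := by positivity
    linarith
  have hb : (-(1/((n:ℝ)+1))) < 0 := by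
    have : (0:ℝ) < 1/((n:ℝ)+1) := by positivity
    linarith
  rw [StieltjesFunction.measure_Ioc, h _ hb, h _ ha, sub_zero, ENNReal.ofReal_zero]

/-- One-sided comparison kernel: if the "upper" constraining pair has no
contact with `B` on `(x, y]`, then `min (u - U) (v - V)` does not decrease. -/
private lemma core (u U v V : ℝ → ℝ) (A B : Set ℝ)
    (hu : Monotone u) (hv : Monotone v)
    (hAB : ∀ s, s ∈ A → v s - V s ≤ u s - U s)
    (hUc : ∀ a b : ℝ, a ≤ b → (∀ s, a < s → s ≤ b → s ∉ A) → U b = U a)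
    (hUl : ∀ a : ℝ, a ∉ A → Filter.Tendsto U (nhdsWithin a (Set.Iio a)) (nhds (U a)))
    (hVc : ∀ a b : ℝ, a ≤ b → (∀ s, a < s → s ≤ b → s ∉ B) → V b = V a)
    (x y : ℝ) (hxy : x ≤ y) (hB : ∀ s, x < s → s ≤ y → s ∉ B) :
    min (u x - U x) (v x - V x) ≤ min (u y - U y) (v y - V y) := by
  have hβ : ∀ s, x ≤ s → s ≤ y → v x - V x ≤ v s - V s := by
    intro s h1 h2
    have hVs : V s = V x := hVc x s h1 (fun r hr1 hr2 => hB r hr1 (hr2.trans h2))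
    have := hv h1
    linarith
  have hm : min (u x - U x) (v x - V x) ≤ v y - V y :=
    (min_le_right _ _).trans (hβ y hxy le_rfl)
  rcases le_or_gt (v y - V y) (u y - U y) with hcy | hcy
  · rw [min_eq_right hcy]; exact hm
  · refine le_min ?_ hm
    by_cases hS : ∃ s, x < s ∧ s ≤ y ∧ v s - V s ≤ u s - U s
    · obtain ⟨s₁, hs₁⟩ := hS
      have hne : {s | x < s ∧ s ≤ y ∧ v s - V s ≤ u s - U s}.Nonempty := ⟨s₁, hs₁⟩
      have hbdd : BddAbove {s | x < s ∧ s ≤ y ∧ v s - V s ≤ u s - U s} :=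
        ⟨y, fun s hs => hs.2.1⟩
      set w := sSup {s | x < s ∧ s ≤ y ∧ v s - V s ≤ u s - U s} with hw
      have hwy : w ≤ y := csSup_le hne (fun s hs => hs.2.1)
      have hxw : x < w := lt_of_lt_of_le hs₁.1 (le_csSup hbdd hs₁)
      have hAfree : ∀ s, w < s → s ≤ y → s ∉ A := by
        intro s h1 h2 hsA
        have hmem : s ∈ {s | x < s ∧ s ≤ y ∧ v s - V s ≤ u s - U s} :=
          ⟨hxw.trans h1, h2, hAB s hsA⟩
        exact absurd (le_csSup hbdd hmem) (not_le.mpr h1)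
      have hUwy : U y = U w := hUc w y hwy hAfree
      have hαwy : u w - U w ≤ u y - U y := by
        have := hu hwy; rw [hUwy]; linarith
      rcases le_or_gt (v w - V w) (u w - U w) with hw2 | hw2
      · have h3 := hβ w hxw.le hwy
        have h4 := min_le_right (u x - U x) (v x - V x)
        linarith
      · have hwA : w ∉ A := fun h => absurd (hAB w h) (not_le.mpr hw2)
        by_contra hcon
        push_neg at hcon
        have hev : U ⁻¹' (Set.Ioi (U w - (min (u x - U x) (v x - V x) - (u y - U y)))) ∈
            nhdsWithin w (Set.Iio w) :=
          hUl w hwA (Ioi_mem_nhds (by linarith))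
        obtain ⟨z, hz1, hsub⟩ := mem_nhdsLT_iff_exists_Ioo_subset.1 hev
        obtain ⟨s₀, hs₀mem, hs₀gt⟩ := exists_lt_of_lt_csSup hne
          (show max z x < w from max_lt hz1 hxw)
        have hs₀w : s₀ < w := by
          rcases lt_or_eq_of_le (le_csSup hbdd hs₀mem) with h | h
          · exact h
          · exact absurd hs₀mem.2.2 (by rw [h]; exact not_le.mpr hw2)
        have hzU : U s₀ ∈ Set.Ioi (U w - (min (u x - U x) (v x - V x) - (u y - U y))) :=
          hsub ⟨(le_max_left z x).trans_lt hs₀gt, hs₀w⟩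
        have hzU' : U w - (min (u x - U x) (v x - V x) - (u y - U y)) < U s₀ := hzU
        have h5 := hβ s₀ ((le_max_right z x).trans hs₀gt.le) hs₀mem.2.1
        have h6 := hs₀mem.2.2
        have h7 := hu hs₀w.le
        have h8 := min_le_right (u x - U x) (v x - V x)
        linarith
    · push_neg at hS
      have hAfree : ∀ s, x < s → s ≤ y → s ∉ A := by
        intro s h1 h2 hsA
        exact absurd (hAB s hsA) (not_le.mpr (hS s h1 h2))
      have hUxy : U y = U x := hUc x y hxy hAfree
      have h1 := min_le_left (u x - U x) (v x - V x)
      have h2 := hu hxy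
      rw [hUxy]
      linarith

/-- If `V` is left-continuous at `y` and `v - V ≥ 0` strictly to the left of `y`,
then `v - V ≥ 0` at `y`. -/
private lemma half (v V : ℝ → ℝ) (y : ℝ) (hv : Monotone v)
    (htd : Filter.Tendsto V (nhdsWithin y (Set.Iio y)) (nhds (V y)))
    (hleft : ∀ s : ℝ, s < y → 0 ≤ v s - V s) : 0 ≤ v y - V y := by
  by_contra hcon
  push_neg at hcon
  have hev : V ⁻¹' (Set.Ioi (v y)) ∈ nhdsWithin y (Set.Iio y) :=
    htd (Ioi_mem_nhds (by linarith))
  obtain ⟨s, hs1, hs2⟩ := (Filter.eventually_iff.2 hev).and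
    (eventually_mem_nhdsWithin (s := Set.Iio y) (a := y)) |>.exists
  have h1 : v y < V s := hs1
  have h2 : s < y := hs2
  have h3 := hleft s h2
  have h4 := hv h2.le
  linarith

/-- Monotonicity of the constraining processes with respect to the domain:
if `ℓ̃ ≤ ℓ ≤ r ≤ r̃` are càdlàg with `inf_{t≥0} (r(t) - ℓ(t)) > 0`, and the pairs
`(η_ℓ, η_r)` and `(η_{ℓ̃}, η_{r̃})` are the constraining processes of the Skorokhod
problems on `[ℓ(·), r(·)]` and `[ℓ̃(·), r̃(·)]` for the same input `ψ` (normalized to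
vanish at negative times), then `η_r(t) ≥ η_{r̃}(t)` and `η_ℓ(t) ≥ η_{ℓ̃}(t)` for all
`t ≥ 0`. -/
theorem constraining_monotone_domain
    (l lt r rt ψ φ η φ' η' : ℝ → ℝ) (ηl ηr ηlt ηrt : StieltjesFunction ℝ)
    (hl : Cadlag l) (hlt : Cadlag lt) (hr : Cadlag r) (hrt : Cadlag rt)
    (hψ : Cadlag ψ) (hφ : Cadlag φ) (hη : Cadlag η) (hφ' : Cadlag φ') (hη' : Cadlag η')
    (hltl : ∀ t : ℝ, 0 ≤ t → lt t ≤ l t)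
    (hlr : ∀ t : ℝ, 0 ≤ t → l t ≤ r t)
    (hrrt : ∀ t : ℝ, 0 ≤ t → r t ≤ rt t)
    (hsep : ∃ ε : ℝ, 0 < ε ∧ ∀ t : ℝ, 0 ≤ t → ε ≤ r t - l t)
    (hSP : SPwith l r ψ φ η ηl ηr)
    (hSPt : SPwith lt rt ψ φ' η' ηlt ηrt)
    (hnorm : ∀ s : ℝ, s < 0 → ηl s = 0 ∧ ηr s = 0 ∧ ηlt s = 0 ∧ ηrt s = 0) :
    ∀ t : ℝ, 0 ≤ t → ηrt t ≤ ηr t ∧ ηlt t ≤ ηl t := by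
  obtain ⟨ε, hε, hsep'⟩ := hsep
  obtain ⟨hSP1, hSP2, hSP3, hSP4⟩ := hSP
  obtain ⟨hSPt1, hSPt2, hSPt3, hSPt4⟩ := hSPt
  set A : Set ℝ := {s | 0 ≤ s ∧ φ' s = lt s} with hAdef
  set B : Set ℝ := {s | 0 ≤ s ∧ φ' s = rt s} with hBdef
  have hAnull : ηlt.measure Aᶜ = 0 := by
    have h1 : ηlt.measure (Set.Iio 0) = 0 := neg_null ηlt (fun s hs => (hnorm s hs).2.2.1)
    have hsub : Aᶜ ⊆ Set.Iio 0 ∪ {s : ℝ | 0 ≤ s ∧ lt s < φ' s} := by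
      intro s hs
      rcases lt_or_ge s 0 with h | h
      · exact Or.inl h
      · exact Or.inr ⟨h, lt_of_le_of_ne ((hSPt1 s h).2.1) (fun heq => hs ⟨h, heq.symm⟩)⟩
    exact MeasureTheory.measure_mono_null hsub (MeasureTheory.measure_union_null h1 hSPt3)
  have hBnull : ηrt.measure Bᶜ = 0 := by
    have h1 : ηrt.measure (Set.Iio 0) = 0 := neg_null ηrt (fun s hs => (hnorm s hs).2.2.2)
    have hsub : Bᶜ ⊆ Set.Iio 0 ∪ {s : ℝ | 0 ≤ s ∧ φ' s < rt s} := by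
      intro s hs
      rcases lt_or_ge s 0 with h | h
      · exact Or.inl h
      · exact Or.inr ⟨h, lt_of_le_of_ne ((hSPt1 s h).2.2) (fun heq => hs ⟨h, heq⟩)⟩
    exact MeasureTheory.measure_mono_null hsub (MeasureTheory.measure_union_null h1 hSPt4)
  have hUc : ∀ a b : ℝ, a ≤ b → (∀ s, a < s → s ≤ b → s ∉ A) → ηlt b = ηlt a := by
    intro a b hab hfree
    have h0 : ηlt.measure (Set.Ioc a b) = 0 :=
      MeasureTheory.measure_mono_null (fun s hs => hfree s hs.1 hs.2) hAnull
    rw [StieltjesFunction.measure_Ioc] at h0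
    have := ENNReal.ofReal_eq_zero.1 h0
    exact le_antisymm (by linarith) (ηlt.mono hab)
  have hVc : ∀ a b : ℝ, a ≤ b → (∀ s, a < s → s ≤ b → s ∉ B) → ηrt b = ηrt a := by
    intro a b hab hfree
    have h0 : ηrt.measure (Set.Ioc a b) = 0 :=
      MeasureTheory.measure_mono_null (fun s hs => hfree s hs.1 hs.2) hBnull
    rw [StieltjesFunction.measure_Ioc] at h0
    have := ENNReal.ofReal_eq_zero.1 h0
    exact le_antisymm (by linarith) (ηrt.mono hab)
  have hUl : ∀ a : ℝ, a ∉ A →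
      Filter.Tendsto ηlt (nhdsWithin a (Set.Iio a)) (nhds (ηlt a)) := by
    intro a ha
    have h0 : ηlt.measure {a} = 0 :=
      MeasureTheory.measure_mono_null (Set.singleton_subset_iff.2 ha) hAnull
    rw [StieltjesFunction.measure_singleton] at h0
    have h1 := ENNReal.ofReal_eq_zero.1 h0
    have h2 : Function.leftLim ηlt a ≤ ηlt a := ηlt.mono.leftLim_le le_rfl
    have h3 : Function.leftLim ηlt a = ηlt a := le_antisymm h2 (by linarith)
    have h4 := ηlt.mono.tendsto_leftLim a
    rwa [h3] at h4
  have hVl : ∀ a : ℝ, a ∉ B →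
      Filter.Tendsto ηrt (nhdsWithin a (Set.Iio a)) (nhds (ηrt a)) := by
    intro a ha
    have h0 : ηrt.measure {a} = 0 :=
      MeasureTheory.measure_mono_null (Set.singleton_subset_iff.2 ha) hBnull
    rw [StieltjesFunction.measure_singleton] at h0
    have h1 := ENNReal.ofReal_eq_zero.1 h0
    have h2 : Function.leftLim ηrt a ≤ ηrt a := ηrt.mono.leftLim_le le_rfl
    have h3 : Function.leftLim ηrt a = ηrt a := le_antisymm h2 (by linarith)
    have h4 := ηrt.mono.tendsto_leftLim a
    rwa [h3] at h4
  have hAB : ∀ s, s ∈ A → ηr s - ηrt s ≤ ηl s - ηlt s := by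
    intro s hs
    obtain ⟨hs0, hseq⟩ := hs
    have e1 := (hSP1 s hs0).1
    have e2 := (hSP1 s hs0).2.1
    have e3 := (hSPt1 s hs0).1
    have e4 := hSP2 s hs0
    have e5 := hSPt2 s hs0
    have e6 := hltl s hs0
    linarith
  have hBA : ∀ s, s ∈ B → ηl s - ηlt s ≤ ηr s - ηrt s := by
    intro s hs
    obtain ⟨hs0, hseq⟩ := hs
    have e1 := (hSP1 s hs0).1
    have e2 := (hSP1 s hs0).2.2
    have e3 := (hSPt1 s hs0).1
    have e4 := hSP2 s hs0
    have e5 := hSPt2 s hs0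
    have e6 := hrrt s hs0
    linarith
  have hdisj : ∀ s : ℝ, s ∉ A ∨ s ∉ B := by
    intro s
    by_cases hsA : s ∈ A
    · right
      intro hsB
      obtain ⟨hs0, h1⟩ := hsA
      obtain ⟨_, h2⟩ := hsB
      have h3 := hsep' s hs0
      have h4 := hltl s hs0
      have h5 := hrrt s hs0
      linarith [h1 ▸ h2]
    · exact Or.inl hsA
  intro t ht
  set f : ℝ → ℝ := fun s => min (ηl s - ηlt s) (ηr s - ηrt s) with hf
  have hfneg : ∀ s : ℝ, s < 0 → f s = 0 := by
    intro s hs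
    obtain ⟨n1, n2, n3, n4⟩ := hnorm s hs
    simp [hf, n1, n2, n3, n4]
  have hjump : ∀ y : ℝ, (∀ s, s < y → 0 ≤ f s) → 0 ≤ f y := by
    intro y hy
    have hα : y ∉ A → 0 ≤ ηl y - ηlt y := fun h =>
      half ηl ηlt y ηl.mono (hUl y h)
        (fun s hs => (hy s hs).trans (min_le_left _ _))
    have hβ : y ∉ B → 0 ≤ ηr y - ηrt y := fun h =>
      half ηr ηrt y ηr.mono (hVl y h)
        (fun s hs => (hy s hs).trans (min_le_right _ _))
    rcases hdisj y with h | h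
    · have h1 := hα h
      have h2 : 0 ≤ ηr y - ηrt y := by
        by_cases hB' : y ∈ B
        · exact h1.trans (hBA y hB')
        · exact hβ hB'
      exact le_min h1 h2
    · have h1 := hβ h
      have h2 : 0 ≤ ηl y - ηlt y := by
        by_cases hA' : y ∈ A
        · exact h1.trans (hAB y hA')
        · exact hα hA'
      exact le_min h2 h1
  have Pβ : ∀ a b : ℝ, a ≤ b → (∀ s, a < s → s ≤ b → s ∉ B) → f a ≤ f b :=
    fun a b hab hfree =>
      core ηl ηlt ηr ηrt A B ηl.mono ηr.mono hAB hUc hUl hVc a b hab hfree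
  have Pα : ∀ a b : ℝ, a ≤ b → (∀ s, a < s → s ≤ b → s ∉ A) → f a ≤ f b := by
    intro a b hab hfree
    have h := core ηr ηrt ηl ηlt B A ηr.mono ηl.mono hBA hVc hVl hUc a b hab hfree
    rw [min_comm (ηr a - ηrt a) (ηl a - ηlt a),
      min_comm (ηr b - ηrt b) (ηl b - ηlt b)] at h
    exact h
  set G : Set ℝ := {x | x ≤ t ∧ ∀ s, s ≤ x → 0 ≤ f s} with hG
  have hGne : G.Nonempty := by
    refine ⟨-1, by linarith, fun s hs => ?_⟩
    rw [hfneg s (by linarith)]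
  have hGbdd : BddAbove G := ⟨t, fun x hx => hx.1⟩
  set c := sSup G with hc
  have hct : c ≤ t := csSup_le hGne (fun x hx => hx.1)
  have hbelow : ∀ s, s < c → 0 ≤ f s := by
    intro s hs
    obtain ⟨x, hxG, hsx⟩ := exists_lt_of_lt_csSup hGne hs
    exact hxG.2 s hsx.le
  have hfc : 0 ≤ f c := hjump c hbelow
  have hcG : c ∈ G := ⟨hct, fun s hs => hs.lt_or_eq.elim (hbelow s) (fun h => h ▸ hfc)⟩
  have hceqt : c = t := by
    by_contra hnet
    have hclt : c < t := lt_of_le_of_ne hct hnet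
    rcases lt_or_ge c 0 with hc0 | hc0
    · have hmem : c/2 ∈ G := by
        refine ⟨by linarith, fun s hs => ?_⟩
        rw [hfneg s (by linarith)]
      have := le_csSup hGbdd hmem
      linarith
    · have hsepc : ε ≤ rt c - lt c := by
        have h1 := hsep' c hc0
        have h2 := hltl c hc0
        have h3 := hrrt c hc0
        linarith
      have hmem := hSPt1 c hc0
      rcases le_or_gt (φ' c) (lt c + ε/2) with hclose | hfar
      · -- φ' c is strictly below rt c : no B-contact just to the right
        have hlt2 : φ' c - rt c < 0 := by linarith [hmem.2.2]
        have hcont : ContinuousWithinAt (fun s => φ' s - rt s) (Set.Ici c) c :=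
          ((hφ' c hc0).1).sub ((hrt c hc0).1)
        have hev : (fun s => φ' s - rt s) ⁻¹' (Set.Iio 0) ∈ nhdsWithin c (Set.Ici c) :=
          hcont (Iio_mem_nhds (show (fun s => φ' s - rt s) c < 0 by simp only []; linarith))
        obtain ⟨δ, hδ, hball⟩ := Metric.mem_nhdsWithin_iff.1 hev
        set x' := c + min (δ/2) ((t - c)/2) with hx'
        have hmin : 0 < min (δ/2) ((t - c)/2) := lt_min (by linarith) (by linarith)
        have hx'1 : c < x' := by simp only [hx']; linarith
        have hx't : x' ≤ t := by
          have := min_le_right (δ/2) ((t - c)/2); simp only [hx']; linarith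
        have hBfree : ∀ s, c < s → s ≤ x' → s ∉ B := by
          intro s h1 h2 hsB
          have hd : dist s c < δ := by
            rw [Real.dist_eq, abs_of_pos (by linarith : (0:ℝ) < s - c)]
            have h3 := min_le_left (δ/2) ((t - c)/2)
            simp only [hx'] at h2
            linarith
          have h4 : φ' s - rt s < 0 := hball ⟨Metric.mem_ball.2 hd, le_of_lt h1⟩
          have h5 := hsB.2
          linarith
        have hmemG : x' ∈ G := by
          refine ⟨hx't, fun s hs => ?_⟩
          rcases le_or_gt s c with h | h
          · exact hcG.2 s h
          · exact hfc.trans (Pβ c s h.le (fun u hu1 hu2 => hBfree u hu1 (hu2.trans hs)))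
        have := le_csSup hGbdd hmemG
        linarith
      · -- φ' c is strictly above lt c : no A-contact just to the right
        have hgt2 : 0 < φ' c - lt c := by linarith
        have hcont : ContinuousWithinAt (fun s => φ' s - lt s) (Set.Ici c) c :=
          ((hφ' c hc0).1).sub ((hlt c hc0).1)
        have hev : (fun s => φ' s - lt s) ⁻¹' (Set.Ioi 0) ∈ nhdsWithin c (Set.Ici c) :=
          hcont (Ioi_mem_nhds (show (0:ℝ) < (fun s => φ' s - lt s) c by simp only []; linarith))
        obtain ⟨δ, hδ, hball⟩ := Metric.mem_nhdsWithin_iff.1 hev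
        set x' := c + min (δ/2) ((t - c)/2) with hx'
        have hmin : 0 < min (δ/2) ((t - c)/2) := lt_min (by linarith) (by linarith)
        have hx'1 : c < x' := by simp only [hx']; linarith
        have hx't : x' ≤ t := by
          have := min_le_right (δ/2) ((t - c)/2); simp only [hx']; linarith
        have hAfree : ∀ s, c < s → s ≤ x' → s ∉ A := by
          intro s h1 h2 hsA
          have hd : dist s c < δ := by
            rw [Real.dist_eq, abs_of_pos (by linarith : (0:ℝ) < s - c)]
            have h3 := min_le_left (δ/2) ((t - c)/2)
            simp only [hx'] at h2
            linarith
          have h4 : 0 < φ' s - lt s := hball ⟨Metric.mem_ball.2 hd, le_of_lt h1⟩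
          have h5 := hsA.2
          linarith
        have hmemG : x' ∈ G := by
          refine ⟨hx't, fun s hs => ?_⟩
          rcases le_or_gt s c with h | h
          · exact hcG.2 s h
          · exact hfc.trans (Pα c s h.le (fun u hu1 hu2 => hAfree u hu1 (hu2.trans hs)))
        have := le_csSup hGbdd hmemG
        linarith
  have hft : 0 ≤ f t := hceqt ▸ hfc
  have h1 : f t ≤ ηr t - ηrt t := min_le_right _ _
  have h2 : f t ≤ ηl t - ηlt t := min_le_left _ _
  exact ⟨by linarith, by linarith⟩
end

section
/- Monotonicity of the ESM with respect to the input: let (φ, η) and (φ′, η′) solve the ESP on [ℓ(·), r(·)] for c₀ + ψ and c₀′ + ψ′ respectively, where ψ = ψ′ + ν for a nondecreasing càdlàg ν with ν(0) = 0. Then for every t ≥ 0: (1) max( −(c₀ − c₀′)⁺ − ν(t), −(r(t) − ℓ(t)) ) ≤ φ′(t) − φ(t) ≤ min( (c₀′ − c₀)⁺, r(t) − ℓ(t) ); and (2) η(t) − (c₀′ − c₀)⁺ ≤ η′(t) ≤ η(t) + ν(t) + (c₀ − c₀′)⁺. -/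
open Set Filter

open Function Topology in
/-- Comparison lemma, upper bound: if `χ = χ' + D` with `D` nondecreasing on `[0,∞)`,
then `η' t - η t ≤ D t - min (D 0) 0`. -/
lemma esp_compA (l r χ χ' D φ η φ' η' : ℝ → ℝ)
    (hηl : ∀ t : ℝ, 0 < t → ∃ L : ℝ, Tendsto η (𝓝[<] t) (𝓝 L))
    (hη'l : ∀ t : ℝ, 0 < t → ∃ L : ℝ, Tendsto η' (𝓝[<] t) (𝓝 L))
    (hDl : ∀ t : ℝ, 0 < t → ∃ L : ℝ, Tendsto D (𝓝[<] t) (𝓝 L))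
    (hD : ∀ s t : ℝ, 0 ≤ s → s ≤ t → D s ≤ D t)
    (hχ : ∀ t : ℝ, 0 ≤ t → χ t = χ' t + D t)
    (h : ESP l r χ φ η) (h' : ESP l r χ' φ' η') :
    ∀ t : ℝ, 0 ≤ t → η' t - η t ≤ D t - min (D 0) 0 := by
  obtain ⟨hb, hmono, hanti, hjump, h0⟩ := h
  obtain ⟨hb', hmono', hanti', hjump', h0'⟩ := h'
  intro t0 ht0
  by_contra hcon
  push_neg at hcon
  set δ : ℝ → ℝ := fun s => η' s - η s - D s + min (D 0) 0 with hδdef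
  have hm0 : min (D 0) 0 ≤ 0 := min_le_right _ _
  have key : ∀ u : ℝ, 0 ≤ u → 0 < δ u → l u < φ' u ∧ φ u < r u := by
    intro u hu hδu
    have hφu := hb u hu
    have hφ'u := hb' u hu
    have hφsimp : φ u = χ' u + D u + η u := by rw [hφu.1, hχ u hu]
    simp only [hδdef] at hδu
    have hlt : φ u < φ' u := by
      have h1 := hφ'u.1
      linarith
    exact ⟨lt_of_le_of_lt hφu.2.1 hlt, lt_of_lt_of_le hlt hφ'u.2.2⟩
  have hδ0 : δ 0 ≤ 0 := by
    by_contra hc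
    push_neg at hc
    obtain ⟨h1, h2⟩ := key 0 le_rfl hc
    have e1 : η' 0 ≤ 0 := h0'.2 h1
    have e2 : 0 ≤ η 0 := h0.1 h2
    have e3 : min (D 0) 0 ≤ D 0 := min_le_left _ _
    simp only [hδdef] at hc
    linarith
  set S : Set ℝ := {s | 0 ≤ s ∧ s ≤ t0 ∧ δ s ≤ 0} with hSdef
  have h0S : (0 : ℝ) ∈ S := ⟨le_rfl, ht0, hδ0⟩
  have hSne : S.Nonempty := ⟨0, h0S⟩
  have hSbdd : BddAbove S := ⟨t0, fun s hs => hs.2.1⟩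
  set σ := sSup S with hσdef
  have hσ0 : 0 ≤ σ := le_csSup hSbdd h0S
  have hσt0 : σ ≤ t0 := csSup_le hSne fun s hs => hs.2.1
  have hδt0 : 0 < δ t0 := by simp only [hδdef]; linarith
  rcases le_or_gt (δ σ) 0 with hσle | hσpos
  · have hgt : ∀ u, σ < u → u ≤ t0 → 0 < δ u := by
      intro u h1 h2
      by_contra hc
      push_neg at hc
      exact absurd (le_csSup hSbdd ⟨le_trans hσ0 h1.le, h2, hc⟩) (not_le.mpr h1)
    have hA : η' t0 ≤ η' σ := hanti' σ t0 hσ0 hσt0 fun u hu1 hu2 =>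
      (key u (le_trans hσ0 hu1.le) (hgt u hu1 hu2)).1
    have hB : η σ ≤ η t0 := hmono σ t0 hσ0 hσt0 fun u hu1 hu2 =>
      (key u (le_trans hσ0 hu1.le) (hgt u hu1 hu2)).2
    have hC : D σ ≤ D t0 := hD σ t0 hσ0 hσt0
    simp only [hδdef] at hσle
    linarith
  · have hσpos' : 0 < σ := by
      rcases hσ0.lt_or_eq with hlt | heq
      · exact hlt
      · exact absurd hσpos (by rw [← heq]; exact not_lt.mpr hδ0)
    obtain ⟨Lη, hLη⟩ := hηl σ hσpos'
    obtain ⟨Lη', hLη'⟩ := hη'l σ hσpos'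
    obtain ⟨LD, hLD⟩ := hDl σ hσpos'
    have hδtend : Tendsto δ (𝓝[<] σ) (𝓝 (Lη' - Lη - LD + min (D 0) 0)) :=
      ((hLη'.sub hLη).sub hLD).add_const (min (D 0) 0)
    have hfreq : ∃ᶠ s in 𝓝[<] σ, δ s ≤ 0 := by
      rw [frequently_iff]
      intro U hU
      obtain ⟨a, ha, haU⟩ := mem_nhdsLT_iff_exists_Ioo_subset.mp hU
      obtain ⟨s, hsS, hsa⟩ := exists_lt_of_lt_csSup hSne ha
      have hsσ : s ≤ σ := le_csSup hSbdd hsS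
      have hsσ' : s < σ := lt_of_le_of_ne hsσ (by
        intro hcontr
        rw [hcontr] at hsS
        exact absurd hσpos (not_lt.mpr hsS.2.2))
      exact ⟨s, haU ⟨hsa, hsσ'⟩, hsS.2.2⟩
    have hLle : Lη' - Lη - LD + min (D 0) 0 ≤ 0 :=
      isClosed_Iic.mem_of_frequently_of_tendsto hfreq hδtend
    obtain ⟨hl1, hr1⟩ := key σ hσ0 hσpos
    have hje : Function.leftLim η σ ≤ η σ := (hjump σ hσpos').1 hr1
    have hje' : η' σ ≤ Function.leftLim η' σ := (hjump' σ hσpos').2 hl1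
    have hLηeq : Function.leftLim η σ = Lη :=
      leftLim_eq_of_tendsto hLη
    have hLη'eq : Function.leftLim η' σ = Lη' :=
      leftLim_eq_of_tendsto hLη'
    have hDσ : LD ≤ D σ := by
      refine le_of_tendsto hLD ?_
      filter_upwards [Ioo_mem_nhdsLT_of_mem (⟨hσpos', le_rfl⟩ : σ ∈ Ioc 0 σ)] with s hs
      exact hD s σ hs.1.le hs.2.le
    rw [hLηeq] at hje
    rw [hLη'eq] at hje'
    simp only [hδdef] at hσpos
    linarith

open Function Topology in
/-- Comparison lemma, lower bound: if `χ = χ' + D` with `D` nondecreasing on `[0,∞)`,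
then `η t - η' t ≤ max (-(D 0)) 0`. -/
lemma esp_compB (l r χ χ' D φ η φ' η' : ℝ → ℝ)
    (hηl : ∀ t : ℝ, 0 < t → ∃ L : ℝ, Tendsto η (𝓝[<] t) (𝓝 L))
    (hη'l : ∀ t : ℝ, 0 < t → ∃ L : ℝ, Tendsto η' (𝓝[<] t) (𝓝 L))
    (hD : ∀ s t : ℝ, 0 ≤ s → s ≤ t → D s ≤ D t)
    (hχ : ∀ t : ℝ, 0 ≤ t → χ t = χ' t + D t)
    (h : ESP l r χ φ η) (h' : ESP l r χ' φ' η') :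
    ∀ t : ℝ, 0 ≤ t → η t - η' t ≤ max (-(D 0)) 0 := by
  obtain ⟨hb, hmono, hanti, hjump, h0⟩ := h
  obtain ⟨hb', hmono', hanti', hjump', h0'⟩ := h'
  intro t0 ht0
  by_contra hcon
  push_neg at hcon
  set δ : ℝ → ℝ := fun s => η s - η' s - max (-(D 0)) 0 with hδdef
  have hm0 : -(D 0) ≤ max (-(D 0)) 0 := le_max_left _ _
  have hm1 : (0 : ℝ) ≤ max (-(D 0)) 0 := le_max_right _ _
  have key : ∀ u : ℝ, 0 ≤ u → 0 < δ u → l u < φ u ∧ φ' u < r u := by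
    intro u hu hδu
    have hφu := hb u hu
    have hφ'u := hb' u hu
    have hφsimp : φ u = χ' u + D u + η u := by rw [hφu.1, hχ u hu]
    simp only [hδdef] at hδu
    have hDu : D 0 ≤ D u := hD 0 u le_rfl hu
    have hlt : φ' u < φ u := by
      have h1 := hφ'u.1
      linarith
    exact ⟨lt_of_le_of_lt hφ'u.2.1 hlt, lt_of_lt_of_le hlt hφu.2.2⟩
  have hδ0 : δ 0 ≤ 0 := by
    by_contra hc
    push_neg at hc
    obtain ⟨h1, h2⟩ := key 0 le_rfl hc
    have e1 : η 0 ≤ 0 := h0.2 h1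
    have e2 : 0 ≤ η' 0 := h0'.1 h2
    simp only [hδdef] at hc
    linarith
  set S : Set ℝ := {s | 0 ≤ s ∧ s ≤ t0 ∧ δ s ≤ 0} with hSdef
  have h0S : (0 : ℝ) ∈ S := ⟨le_rfl, ht0, hδ0⟩
  have hSne : S.Nonempty := ⟨0, h0S⟩
  have hSbdd : BddAbove S := ⟨t0, fun s hs => hs.2.1⟩
  set σ := sSup S with hσdef
  have hσ0 : 0 ≤ σ := le_csSup hSbdd h0S
  have hσt0 : σ ≤ t0 := csSup_le hSne fun s hs => hs.2.1
  have hδt0 : 0 < δ t0 := by simp only [hδdef]; linarith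
  rcases le_or_gt (δ σ) 0 with hσle | hσpos
  · have hgt : ∀ u, σ < u → u ≤ t0 → 0 < δ u := by
      intro u h1 h2
      by_contra hc
      push_neg at hc
      exact absurd (le_csSup hSbdd ⟨le_trans hσ0 h1.le, h2, hc⟩) (not_le.mpr h1)
    have hA : η t0 ≤ η σ := hanti σ t0 hσ0 hσt0 fun u hu1 hu2 =>
      (key u (le_trans hσ0 hu1.le) (hgt u hu1 hu2)).1
    have hB : η' σ ≤ η' t0 := hmono' σ t0 hσ0 hσt0 fun u hu1 hu2 =>
      (key u (le_trans hσ0 hu1.le) (hgt u hu1 hu2)).2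
    simp only [hδdef] at hσle
    linarith
  · have hσpos' : 0 < σ := by
      rcases hσ0.lt_or_eq with hlt | heq
      · exact hlt
      · exact absurd hσpos (by rw [← heq]; exact not_lt.mpr hδ0)
    obtain ⟨Lη, hLη⟩ := hηl σ hσpos'
    obtain ⟨Lη', hLη'⟩ := hη'l σ hσpos'
    have hδtend : Tendsto δ (𝓝[<] σ) (𝓝 (Lη - Lη' - max (-(D 0)) 0)) :=
      (hLη.sub hLη').sub_const (max (-(D 0)) 0)
    have hfreq : ∃ᶠ s in 𝓝[<] σ, δ s ≤ 0 := by
      rw [frequently_iff]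
      intro U hU
      obtain ⟨a, ha, haU⟩ := mem_nhdsLT_iff_exists_Ioo_subset.mp hU
      obtain ⟨s, hsS, hsa⟩ := exists_lt_of_lt_csSup hSne ha
      have hsσ : s ≤ σ := le_csSup hSbdd hsS
      have hsσ' : s < σ := lt_of_le_of_ne hsσ (by
        intro hcontr
        rw [hcontr] at hsS
        exact absurd hσpos (not_lt.mpr hsS.2.2))
      exact ⟨s, haU ⟨hsa, hsσ'⟩, hsS.2.2⟩
    have hLle : Lη - Lη' - max (-(D 0)) 0 ≤ 0 :=
      isClosed_Iic.mem_of_frequently_of_tendsto hfreq hδtend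
    obtain ⟨hl1, hr1⟩ := key σ hσ0 hσpos
    have hje : η σ ≤ Function.leftLim η σ := (hjump σ hσpos').2 hl1
    have hje' : Function.leftLim η' σ ≤ η' σ := (hjump' σ hσpos').1 hr1
    have hLηeq : Function.leftLim η σ = Lη :=
      leftLim_eq_of_tendsto hLη
    have hLη'eq : Function.leftLim η' σ = Lη' :=
      leftLim_eq_of_tendsto hLη'
    rw [hLηeq] at hje
    rw [hLη'eq] at hje'
    simp only [hδdef] at hσpos
    linarith

/-- Monotonicity of the extended Skorokhod map with respect to the input: if
`(φ, η)` and `(φ', η')` solve the ESP on `[ℓ(·), r(·)]` for `c₀ + ψ` and `c₀' + ψ'`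
respectively, where `ψ = ψ' + ν` for a nondecreasing càdlàg `ν` with `ν(0) = 0`,
then for every `t ≥ 0`:
(1) `max(-(c₀ - c₀')⁺ - ν(t), -(r(t) - ℓ(t))) ≤ φ'(t) - φ(t) ≤ min((c₀' - c₀)⁺, r(t) - ℓ(t))`;
(2) `η(t) - (c₀' - c₀)⁺ ≤ η'(t) ≤ η(t) + ν(t) + (c₀ - c₀')⁺`. -/
theorem esp_monotone_input
    (l r ψ ψ' ν φ η φ' η' : ℝ → ℝ) (c₀ c₀' : ℝ)
    (hl : Cadlag l) (hr : Cadlag r) (hlr : ∀ t : ℝ, 0 ≤ t → l t ≤ r t)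
    (hψ : Cadlag ψ) (hψ' : Cadlag ψ') (hν : Cadlag ν)
    (hφ : Cadlag φ) (hη : Cadlag η) (hφ' : Cadlag φ') (hη' : Cadlag η')
    (hνmono : ∀ s t : ℝ, 0 ≤ s → s ≤ t → ν s ≤ ν t) (hν0 : ν 0 = 0)
    (hψν : ∀ t : ℝ, 0 ≤ t → ψ t = ψ' t + ν t)
    (h : ESP l r (fun t => c₀ + ψ t) φ η)
    (h' : ESP l r (fun t => c₀' + ψ' t) φ' η') :
    ∀ t : ℝ, 0 ≤ t →
      (max (-(max (c₀ - c₀') 0) - ν t) (-(r t - l t)) ≤ φ' t - φ t ∧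
        φ' t - φ t ≤ min (max (c₀' - c₀) 0) (r t - l t)) ∧
      (η t - max (c₀' - c₀) 0 ≤ η' t ∧ η' t ≤ η t + ν t + max (c₀ - c₀') 0) := by
  set D : ℝ → ℝ := fun s => (c₀ - c₀') + (ψ s - ψ' s) with hDdef
  have hDeq : ∀ t : ℝ, 0 ≤ t → D t = c₀ - c₀' + ν t := by
    intro t ht
    simp only [hDdef]
    rw [hψν t ht]
    ring
  have hD0 : D 0 = c₀ - c₀' := by rw [hDeq 0 le_rfl, hν0]; ring
  have hDmono : ∀ s t : ℝ, 0 ≤ s → s ≤ t → D s ≤ D t := by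
    intro s t hs hst
    rw [hDeq s hs, hDeq t (hs.trans hst)]
    linarith [hνmono s t hs hst]
  have hDl : ∀ t : ℝ, 0 < t → ∃ L : ℝ, Tendsto D (nhdsWithin t (Set.Iio t)) (nhds L) := by
    intro t ht
    obtain ⟨L1, hL1⟩ := (hψ t ht.le).2 ht
    obtain ⟨L2, hL2⟩ := (hψ' t ht.le).2 ht
    exact ⟨(c₀ - c₀') + (L1 - L2), tendsto_const_nhds.add (hL1.sub hL2)⟩
  have hχD : ∀ t : ℝ, 0 ≤ t → (fun t => c₀ + ψ t) t = (fun t => c₀' + ψ' t) t + D t := by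
    intro t _
    simp only [hDdef]
    ring
  have hηl : ∀ t : ℝ, 0 < t → ∃ L : ℝ, Tendsto η (nhdsWithin t (Set.Iio t)) (nhds L) :=
    fun t ht => (hη t ht.le).2 ht
  have hη'l : ∀ t : ℝ, 0 < t → ∃ L : ℝ, Tendsto η' (nhdsWithin t (Set.Iio t)) (nhds L) :=
    fun t ht => (hη' t ht.le).2 ht
  have HA := esp_compA l r _ _ D φ η φ' η' hηl hη'l hDl hDmono hχD h h'
  have HB := esp_compB l r _ _ D φ η φ' η' hηl hη'l hDmono hχD h h'
  intro t ht
  have hφt := h.1 t ht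
  have hφ't := h'.1 t ht
  have hAt := HA t ht
  have hBt := HB t ht
  rw [hDeq t ht] at hAt
  rw [hD0] at hAt hBt
  have hrl := hlr t ht
  have hνt : 0 ≤ ν t := by rw [← hν0]; exact hνmono 0 t le_rfl ht
  have e1 : φ t = c₀ + ψ t + η t := hφt.1
  have e2 : φ' t = c₀' + ψ' t + η' t := hφ't.1
  have key1 : φ' t - φ t = (c₀' - c₀) - ν t + (η' t - η t) := by
    rw [e1, e2, hψν t ht]
    ring
  have hφl := hφt.2.1
  have hφr := hφt.2.2
  have hφ'l := hφ't.2.1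
  have hφ'r := hφ't.2.2
  rcases le_total c₀ c₀' with hcc | hcc
  · have h1 : max (c₀ - c₀') 0 = 0 := max_eq_right (by linarith)
    have h2 : max (c₀' - c₀) 0 = c₀' - c₀ := max_eq_left (by linarith)
    have h3 : min (c₀ - c₀') 0 = c₀ - c₀' := min_eq_left (by linarith)
    have h4 : max (-(c₀ - c₀')) 0 = c₀' - c₀ := by rw [show -(c₀ - c₀') = c₀' - c₀ by ring]; exact h2
    rw [h3] at hAt
    rw [h4] at hBt
    rw [h1, h2]
    exact ⟨⟨max_le (by linarith) (by linarith), le_min (by linarith) (by linarith)⟩,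
      by linarith, by linarith⟩
  · have h1 : max (c₀ - c₀') 0 = c₀ - c₀' := max_eq_left (by linarith)
    have h2 : max (c₀' - c₀) 0 = 0 := max_eq_right (by linarith)
    have h3 : min (c₀ - c₀') 0 = 0 := min_eq_right (by linarith)
    have h4 : max (-(c₀ - c₀')) 0 = 0 := max_eq_right (by linarith)
    rw [h3] at hAt
    rw [h4] at hBt
    rw [h1, h2]
    exact ⟨⟨max_le (by linarith) (by linarith), le_min (by linarith) (by linarith)⟩,
      by linarith, by linarith⟩
end

section
/- Infinite variation criterion (comb domain): let W = Γ̄_{ℓ,r}(x + B) be reflected Brownian motion in the time-dependent interval [ℓ(·), r(·)] with decomposition W = x + B + Y. Suppose there is a strictly increasing sequence {s_k}_{k∈K} in [0,τ] and a constant c₁ < ∞ with min( r(s_{k+1}) − ℓ(s_k), r(s_k) − ℓ(s_{k+1}) ) ≤ c₁ (s_{k+1} − s_k)^{1/2} for all k, and ∑_k (s_{k+1} − s_k)^{1/2} = ∞. Then the total variation of Y on [0, τ] is almost surely infinite. -/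
open Set Filter MeasureTheory ProbabilityTheory

section Aux
open Topology
open scoped ENNReal NNReal

/-- `B` is a standard one-dimensional Brownian motion started at `0`:
it starts at `0`, has continuous paths, Gaussian increments with mean `0` and
variance `t - s`, and independent increments. -/
def IsStandardBrownianMotion {Ω : Type*} [MeasureSpace Ω]
    (B : ℝ → Ω → ℝ) : Prop :=
  (∀ ω, B 0 ω = 0) ∧
  (∀ ω, Continuous fun t => B t ω) ∧
  (∀ t : ℝ, Measurable (B t)) ∧
  (∀ s t : ℝ, 0 ≤ s → s ≤ t →
    Measure.map (fun ω => B t ω - B s ω) ℙ =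
      gaussianReal 0 (Real.toNNReal (t - s))) ∧
  (∀ n : ℕ, ∀ t : ℕ → ℝ, (∀ i, 0 ≤ t i) → Monotone t →
    iIndepFun (m := fun _ : Fin n => (inferInstance : MeasurableSpace ℝ))
      (fun i ω => B (t (i + 1)) ω - B (t i) ω) ℙ)

lemma Cadlag.bddAbove_image_Icc {f : ℝ → ℝ} (hf : Cadlag f) (T : ℝ) :
    BddAbove (f '' Set.Icc 0 T) := by
  rcases lt_or_ge T 0 with hT | hT
  · simp [Set.Icc_eq_empty_of_lt hT]
  have key : ∀ u : ℝ, u ∈ Set.Icc 0 T → ∃ M : ℝ, ∀ᶠ y in 𝓝 u, y ∈ Set.Icc 0 T → f y ≤ M := by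
    intro u hu
    have hright : ∀ᶠ y in 𝓝[≥] u, y ∈ Set.Icc 0 T → f y ≤ f u + 1 := by
      have := ((hf u hu.1).1).eventually_lt_const (lt_add_one (f u))
      exact this.mono fun y hy _ => hy.le
    rcases eq_or_lt_of_le hu.1 with h0 | h0
    · have hleft : ∀ᶠ y in 𝓝[<] u, y ∈ Set.Icc 0 T → f y ≤ f u + 1 := by
        filter_upwards [eventually_mem_nhdsWithin] with y hy hyIcc
        exact absurd hyIcc.1 (not_le.2 (h0 ▸ hy))
      refine ⟨f u + 1, ?_⟩
      rw [← nhdsLT_sup_nhdsGE u, eventually_sup]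
      exact ⟨hleft, hright⟩
    · obtain ⟨L, hL⟩ := (hf u hu.1).2 h0
      have hleft : ∀ᶠ y in 𝓝[<] u, y ∈ Set.Icc 0 T → f y ≤ L + 1 := by
        have := hL.eventually_lt_const (lt_add_one L)
        exact this.mono fun y hy _ => hy.le
      refine ⟨max (f u + 1) (L + 1), ?_⟩
      rw [← nhdsLT_sup_nhdsGE u, eventually_sup]
      constructor
      · exact hleft.mono fun y hy hyIcc => (hy hyIcc).trans (le_max_right _ _)
      · exact hright.mono fun y hy hyIcc => (hy hyIcc).trans (le_max_left _ _)
  choose! M hM using key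
  have hcov := isCompact_Icc (a := (0:ℝ)) (b := T)
  obtain ⟨t, ht⟩ := hcov.elim_nhds_subcover'
    (U := fun u hu => {y | y ∈ Set.Icc 0 T → f y ≤ M u}) (fun u hu => hM u hu)
  have h0mem : (0:ℝ) ∈ Set.Icc 0 T := ⟨le_refl _, hT⟩
  obtain ⟨u₀, hu₀t, -⟩ := Set.mem_iUnion₂.1 (ht h0mem)
  have htne : t.Nonempty := ⟨u₀, hu₀t⟩
  refine ⟨t.sup' htne fun u => M ↑u, ?_⟩
  rintro y ⟨z, hz, rfl⟩
  obtain ⟨u, hut, hzu⟩ := Set.mem_iUnion₂.1 (ht hz)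
  exact le_trans (hzu hz) (Finset.le_sup' (s := t) (fun u => M ↑u) hut)

lemma xi_bounds {l r ψ : ℝ → ℝ} {t : ℝ} (hψ : Continuous ψ)
    (hlb : BddAbove (l '' Set.Icc 0 t))
    (hlr : l t ≤ r t) (ht : 0 ≤ t) :
    ψ t - r t ≤ Xi l r ψ t ∧ Xi l r ψ t ≤ ψ t - l t := by
  obtain ⟨mψ, hmψ⟩ : BddBelow (ψ '' Set.Icc 0 t) :=
    (isCompact_Icc).bddBelow_image hψ.continuousOn
  obtain ⟨Ml, hMl⟩ := hlb
  have hlow : ∀ s' : ℝ, 0 ≤ s' → ∀ u ∈ Set.Icc s' t, mψ - Ml ≤ ψ u - l u := by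
    intro s' hs' u hu
    have hu' : u ∈ Set.Icc 0 t := ⟨le_trans hs' hu.1, hu.2⟩
    have h1 : mψ ≤ ψ u := hmψ ⟨u, hu', rfl⟩
    have h2 : l u ≤ Ml := hMl ⟨u, hu', rfl⟩
    linarith
  have hbdd : ∀ s' : ℝ, 0 ≤ s' → BddBelow ((fun u => ψ u - l u) '' Set.Icc s' t) := by
    intro s' hs'
    exact ⟨mψ - Ml, by rintro y ⟨u, hu, rfl⟩; exact hlow s' hs' u hu⟩
  set I : ℝ → ℝ := fun s' => sInf ((fun u => ψ u - l u) '' Set.Icc s' t) with hI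
  have hIle : ∀ s' ∈ Set.Icc (0:ℝ) t, I s' ≤ ψ t - l t := by
    intro s' hs'
    exact csInf_le (hbdd s' hs'.1) ⟨t, ⟨hs'.2, le_refl t⟩, rfl⟩
  set G : ℝ → ℝ := fun s' => min (ψ s' - r s') (I s') with hG
  have hGbdd : BddAbove (G '' Set.Icc 0 t) := by
    refine ⟨ψ t - l t, ?_⟩
    rintro y ⟨s', hs', rfl⟩
    exact le_trans (min_le_right _ _) (hIle s' hs')
  have hIt : I t = ψ t - l t := by
    rw [hI]
    simp [Set.Icc_self]
  constructor
  · have hGt : G t = ψ t - r t := by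
      rw [hG]
      simp only [hIt]
      exact min_eq_left (by linarith)
    have : G t ≤ sSup (G '' Set.Icc 0 t) :=
      le_csSup hGbdd ⟨t, ⟨ht, le_refl t⟩, rfl⟩
    calc ψ t - r t = G t := hGt.symm
      _ ≤ sSup (G '' Set.Icc 0 t) := this
      _ ≤ Xi l r ψ t := le_max_right _ _
  · apply max_le
    · exact le_trans (min_le_right _ _) (hIle 0 ⟨le_refl _, ht⟩)
    · apply csSup_le (Set.Nonempty.image G (Set.nonempty_Icc.2 ht))
      rintro y ⟨s', hs', rfl⟩
      exact le_trans (min_le_right _ _) (hIle s' hs')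

lemma increments_iIndepFun {Ω : Type*} [MeasureSpace Ω] {B : ℝ → Ω → ℝ}
    (hB : IsStandardBrownianMotion B)
    (t : ℕ → ℝ) (ht0 : ∀ i, 0 ≤ t i) (hmono : Monotone t) :
    iIndepFun (m := fun _ : ℕ => (inferInstance : MeasurableSpace ℝ))
      (fun j ω => B (t (j + 1)) ω - B (t j) ω) ℙ := by
  rw [iIndepFun_iff_measure_inter_preimage_eq_mul]
  intro S sets hsets
  classical
  set N : ℕ := S.sup id + 1 with hN
  have hSN : ∀ m ∈ S, m < N := fun m hm => Nat.lt_succ_of_le (Finset.le_sup (f := id) hm)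
  have h := (hB.2.2.2.2 N t ht0 hmono).measure_inter_preimage_eq_mul (S.attachFin hSN)
      (sets := fun i : Fin N => sets ↑i) (fun i hi => hsets ↑i ((Finset.mem_attachFin hSN).1 hi))
  have hInter : (⋂ i ∈ S.attachFin hSN,
        (fun ω => B (t ((i : ℕ) + 1)) ω - B (t (i : ℕ)) ω) ⁻¹' sets ↑i)
      = ⋂ j ∈ S, (fun ω => B (t (j + 1)) ω - B (t j) ω) ⁻¹' sets j := by
    ext ω
    simp only [Set.mem_iInter, Finset.mem_attachFin]
    constructor
    · intro hin j hj
      exact hin ⟨j, hSN j hj⟩ hj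
    · intro hin i hi
      exact hin ↑i hi
  have hProd : (∏ i ∈ S.attachFin hSN,
        ℙ ((fun ω => B (t ((i : ℕ) + 1)) ω - B (t (i : ℕ)) ω) ⁻¹' sets ↑i))
      = ∏ j ∈ S, ℙ ((fun ω => B (t (j + 1)) ω - B (t j) ω) ⁻¹' sets j) := by
    refine Finset.prod_nbij (fun i => (i : ℕ)) ?_ ?_ ?_ ?_
    · intro i hi
      exact Finset.mem_coe.2 ((Finset.mem_attachFin hSN).1 (Finset.mem_coe.1 hi))
    · intro i hi i' hi' hii'; exact Fin.val_injective hii'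
    · intro j hj
      refine ⟨⟨j, hSN j (Finset.mem_coe.1 hj)⟩, Finset.mem_coe.2 ?_, rfl⟩
      simpa [Finset.mem_attachFin] using Finset.mem_coe.1 hj
    · intro i hi; rfl
  rw [← hInter, ← hProd]
  exact h

lemma lintegral_prod_range_of_iIndepFun {Ω : Type*} [MeasureSpace Ω]
    [IsProbabilityMeasure (ℙ : Measure Ω)]
    (f : ℕ → Ω → ℝ≥0∞) (hmeas : ∀ i, Measurable (f i))
    (hindep : iIndepFun (m := fun _ : ℕ => (inferInstance : MeasurableSpace ℝ≥0∞)) f ℙ) (n : ℕ) :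
    ∫⁻ ω, ∏ j ∈ Finset.range n, f j ω ∂ℙ = ∏ j ∈ Finset.range n, ∫⁻ ω, f j ω ∂ℙ := by
  induction n with
  | zero => simp
  | succ n ih =>
    have hdep : IndepFun (∏ j ∈ Finset.range n, f j) (f n) ℙ :=
      hindep.indepFun_prod_range_succ hmeas n
    have hmeasP : Measurable (∏ j ∈ Finset.range n, f j) := by
      have : (∏ j ∈ Finset.range n, f j) = fun ω => ∏ j ∈ Finset.range n, f j ω := by
        funext ω; rw [Finset.prod_apply]
      rw [this]
      exact Finset.measurable_prod _ (fun i _ => hmeas i)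
    have key := lintegral_mul_eq_lintegral_mul_lintegral_of_indepFun hmeasP (hmeas n) hdep
    simp only [Pi.mul_apply, Finset.prod_apply] at key
    simp only [Finset.prod_range_succ]
    rw [← ih] at *
    calc ∫⁻ ω, (∏ j ∈ Finset.range n, f j ω) * f n ω ∂ℙ
        = (∫⁻ ω, ∏ j ∈ Finset.range n, f j ω ∂ℙ) * ∫⁻ ω, f n ω ∂ℙ := key
      _ = _ := rfl

lemma gaussian_pos_of_volume_pos {S : Set ℝ} (hvol : 0 < volume S) :
    0 < gaussianReal 0 1 S := by
  rw [gaussianReal_apply 0 (one_ne_zero) S]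
  rcases eq_or_lt_of_le (zero_le : 0 ≤ ∫⁻ x in S, gaussianPDF 0 1 x) with h | h
  · exfalso
    have h0 := h.symm
    rw [lintegral_eq_zero_iff (measurable_gaussianPDF 0 1)] at h0
    have h1 : (volume.restrict S) {x | gaussianPDF 0 1 x ≠ 0} = 0 := h0
    have huniv : {x : ℝ | gaussianPDF 0 1 x ≠ 0} = Set.univ := by
      ext x; simp [ne_of_gt (gaussianPDF_pos 0 one_ne_zero x)]
    rw [huniv, Measure.restrict_apply_univ] at h1
    exact absurd h1 (ne_of_gt hvol)
  · exact h

lemma gaussian_scale_Ici {Δ : ℝ} (hΔ : 0 < Δ) (a : ℝ) :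
    gaussianReal 0 (Real.toNNReal Δ) (Set.Ici (a * Real.sqrt Δ)) =
      gaussianReal 0 1 (Set.Ici a) := by
  have hc : (0:ℝ) < Real.sqrt Δ := Real.sqrt_pos.2 hΔ
  have hvar : (NNReal.mk ((Real.sqrt Δ)^2) (sq_nonneg _) : ℝ≥0) * 1 = Real.toNNReal Δ := by
    ext
    simp [Real.sq_sqrt hΔ.le, Real.coe_toNNReal _ hΔ.le]
  have hmap := gaussianReal_map_const_mul (μ := 0) (v := 1) (Real.sqrt Δ)
  rw [mul_zero, hvar] at hmap
  rw [← hmap, Measure.map_apply (measurable_const_mul _) measurableSet_Ici]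
  congr 1
  ext y
  simp only [Set.mem_preimage, Set.mem_Ici]
  rw [mul_comm a (Real.sqrt Δ)]
  exact mul_le_mul_iff_right₀ hc

lemma gaussian_scale_Iic {Δ : ℝ} (hΔ : 0 < Δ) (a : ℝ) :
    gaussianReal 0 (Real.toNNReal Δ) (Set.Iic (-(a * Real.sqrt Δ))) =
      gaussianReal 0 1 (Set.Iic (-a)) := by
  have hc : (0:ℝ) < Real.sqrt Δ := Real.sqrt_pos.2 hΔ
  have hvar : (NNReal.mk ((Real.sqrt Δ)^2) (sq_nonneg _) : ℝ≥0) * 1 = Real.toNNReal Δ := by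
    ext
    simp [Real.sq_sqrt hΔ.le, Real.coe_toNNReal _ hΔ.le]
  have hmap := gaussianReal_map_const_mul (μ := 0) (v := 1) (Real.sqrt Δ)
  rw [mul_zero, hvar] at hmap
  rw [← hmap, Measure.map_apply (measurable_const_mul _) measurableSet_Iic]
  congr 1
  ext y
  simp only [Set.mem_preimage, Set.mem_Iic]
  rw [mul_comm a (Real.sqrt Δ), ← mul_neg]
  exact mul_le_mul_iff_right₀ hc



lemma factor_bound {q p : ℝ≥0∞} (hq1 : q ≤ 1) (hpq : p ≤ q) (hptop : p ≠ ⊤)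
    {mm : ℝ} (hmm0 : 0 ≤ mm) (hmm1 : mm ≤ 1) :
    ENNReal.ofReal (Real.exp (-mm)) * q + (1 - q) ≤
      ENNReal.ofReal (Real.exp (-(p.toReal / 2 * mm))) := by
  have hqtop : q ≠ ⊤ := (lt_of_le_of_lt hq1 ENNReal.one_lt_top).ne
  have hfin : ENNReal.ofReal (Real.exp (-mm)) * q + (1 - q) ≠ ⊤ :=
    ENNReal.add_ne_top.2 ⟨ENNReal.mul_ne_top ENNReal.ofReal_ne_top hqtop,
      ENNReal.sub_ne_top ENNReal.one_ne_top⟩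
  rw [ENNReal.le_ofReal_iff_toReal_le hfin (Real.exp_pos _).le]
  rw [ENNReal.toReal_add (ENNReal.mul_ne_top ENNReal.ofReal_ne_top hqtop)
    (ENNReal.sub_ne_top ENNReal.one_ne_top), ENNReal.toReal_mul,
    ENNReal.toReal_ofReal (Real.exp_pos _).le,
    ENNReal.toReal_sub_of_le hq1 ENNReal.one_ne_top, ENNReal.toReal_one]
  set pr : ℝ := p.toReal with hpr
  set qr : ℝ := q.toReal with hqr
  have hpr0 : 0 ≤ pr := ENNReal.toReal_nonneg
  have hqr1 : qr ≤ 1 := by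
    have := ENNReal.toReal_mono ENNReal.one_ne_top hq1
    simpa using this
  have hqrp : pr ≤ qr := ENNReal.toReal_mono hqtop hpq
  have hstep1 : Real.exp (-mm) * (1 + mm) ≤ 1 := by
    rw [Real.exp_neg, inv_mul_le_iff₀ (Real.exp_pos mm), mul_one]
    linarith [Real.add_one_le_exp mm]
  have her := Real.exp_pos (-mm)
  have hstep2 : mm / 2 ≤ 1 - Real.exp (-mm) := by
    nlinarith [hstep1, her.le, hmm0, hmm1, mul_nonneg hmm0 (sub_nonneg.2 hmm1)]
  have h1 : 1 - pr / 2 * mm ≤ Real.exp (-(pr / 2 * mm)) := by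
    have := Real.add_one_le_exp (-(pr / 2 * mm))
    linarith
  have h2 : pr * (mm / 2) ≤ pr * (1 - Real.exp (-mm)) :=
    mul_le_mul_of_nonneg_left hstep2 hpr0
  have h3 : pr * (1 - Real.exp (-mm)) ≤ qr * (1 - Real.exp (-mm)) :=
    mul_le_mul_of_nonneg_right hqrp (by linarith)
  nlinarith [h1, h2, h3]

end Aux

open scoped ENNReal NNReal Topology

/-- Infinite-variation criterion (comb domains): let `W = Γ̄_{ℓ,r}(x + B)` be reflected
Brownian motion in the time-dependent interval `[ℓ(·), r(·)]`, with local time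
`Y = W - x - B = -Ξ_{ℓ,r}(x + B)`, and let `τ` be the first time the two boundaries
(or their left limits) touch. If there are a constant `c₁` and a strictly increasing
sequence `{s_k}_{k ∈ K}` in `[0, τ]`, indexed by a set `K` of consecutive integers,
such that `min(r(s_{k+1}) - ℓ(s_k), r(s_k) - ℓ(s_{k+1})) ≤ c₁ √(s_{k+1} - s_k)` for
all `k` with `k, k+1 ∈ K`, and `∑_k √(s_{k+1} - s_k) = ∞`, then the total variation
of `Y` on `[0, τ]` is almost surely infinite. -/
theorem local_time_infinite_variation_comb
    {Ω : Type*} [MeasureSpace Ω] [IsProbabilityMeasure (ℙ : Measure Ω)]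
    (B : ℝ → Ω → ℝ) (hB : IsStandardBrownianMotion B)
    (l r : ℝ → ℝ) (hl : Cadlag l) (hr : Cadlag r)
    (hlr : ∀ t : ℝ, 0 ≤ t → l t ≤ r t)
    (x : ℝ) (Y : Ω → ℝ → ℝ)
    (hY : ∀ ω t, Y ω t = -(Xi l r (fun u => x + B u ω) t))
    (τ : ℝ)
    (hτset : {t : ℝ | 0 < t ∧ (r t = l t ∨ Function.leftLim r t = Function.leftLim l t)}.Nonempty)
    (hτ : τ = sInf {t : ℝ | 0 < t ∧ (r t = l t ∨ Function.leftLim r t = Function.leftLim l t)})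
    (hτpos : 0 < τ)
    (K : Set ℤ) (hK : K.OrdConnected) (s : ℤ → ℝ)
    (hs : StrictMonoOn s K) (hsτ : ∀ k ∈ K, s k ∈ Set.Icc 0 τ)
    (c₁ : ℝ)
    (hmin : ∀ k : ℤ, k ∈ K → k + 1 ∈ K →
      min (r (s (k + 1)) - l (s k)) (r (s k) - l (s (k + 1)))
        ≤ c₁ * Real.sqrt (s (k + 1) - s k))
    (hsum : ∑' k : {k : ℤ // k ∈ K ∧ k + 1 ∈ K},
        ENNReal.ofReal (Real.sqrt (s ((k : ℤ) + 1) - s (k : ℤ))) = ⊤) :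
    ∀ᵐ ω ∂(ℙ : Measure Ω), eVariationOn (Y ω) (Set.Icc 0 τ) = ⊤ := by
  classical
  have hBmeas : ∀ t : ℝ, Measurable (B t) := hB.2.2.1
  have hBcont : ∀ ω, Continuous fun u => B u ω := hB.2.1
  have hWb : ∀ (ω : Ω) (t : ℝ), 0 ≤ t →
      (x + B t ω) - r t ≤ Xi l r (fun u => x + B u ω) t ∧
        Xi l r (fun u => x + B u ω) t ≤ (x + B t ω) - l t := by
    intro ω t ht
    exact xi_bounds (continuous_const.add (hBcont ω)) (hl.bddAbove_image_Icc t) (hlr t ht) ht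
  -- basic facts about the sequence
  have hΔpos : ∀ k : ℤ, k ∈ K → k + 1 ∈ K → 0 < s (k + 1) - s k :=
    fun k hk hk1 => sub_pos.2 (hs hk hk1 (lt_add_one k))
  have hΔτ : ∀ k : ℤ, k ∈ K → k + 1 ∈ K → s (k + 1) - s k ≤ τ := by
    intro k hk hk1
    have h1 := hsτ k hk
    have h2 := hsτ (k + 1) hk1
    simp only [Set.mem_Icc] at h1 h2
    linarith
  set m : ℤ → ℝ := fun k => min (Real.sqrt (s (k + 1) - s k)) 1 with hmdef
  have hm0 : ∀ k, 0 ≤ m k := fun k => le_min (Real.sqrt_nonneg _) zero_le_one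
  have hm1 : ∀ k, m k ≤ 1 := fun k => min_le_right _ _
  have hmsqrt : ∀ k, m k ≤ Real.sqrt (s (k + 1) - s k) := fun k => min_le_left _ _
  set a : ℝ := |c₁| + 1 with hadef
  set S : ℤ → Set ℝ := fun k =>
    if r (s (k + 1)) - l (s k) ≤ c₁ * Real.sqrt (s (k + 1) - s k) then
      Set.Ici (a * Real.sqrt (s (k + 1) - s k))
    else Set.Iic (-(a * Real.sqrt (s (k + 1) - s k))) with hSdef
  have hSmeas : ∀ k, MeasurableSet (S k) := by
    intro k
    rw [hSdef]
    dsimp only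
    split
    · exact measurableSet_Ici
    · exact measurableSet_Iic
  set A : ℤ → Set Ω := fun k => (fun ω => B (s (k + 1)) ω - B (s k) ω) ⁻¹' S k with hAdef
  have hAmeas : ∀ k, MeasurableSet (A k) := fun k => ((hBmeas _).sub (hBmeas _)) (hSmeas k)
  -- deterministic key estimate
  have key1 : ∀ k : ℤ, k ∈ K → k + 1 ∈ K → ∀ ω, ω ∈ A k →
      Real.sqrt (s (k + 1) - s k) ≤ |Y ω (s (k + 1)) - Y ω (s k)| := by
    intro k hk hk1 ω hω
    have hsk0 : (0:ℝ) ≤ s k := (hsτ k hk).1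
    have hsk10 : (0:ℝ) ≤ s (k + 1) := (hsτ (k + 1) hk1).1
    have hW1 := hWb ω (s k) hsk0
    have hW2 := hWb ω (s (k + 1)) hsk10
    have hsq : (0:ℝ) ≤ Real.sqrt (s (k + 1) - s k) := Real.sqrt_nonneg _
    have hc₁ : c₁ * Real.sqrt (s (k + 1) - s k) ≤ |c₁| * Real.sqrt (s (k + 1) - s k) :=
      mul_le_mul_of_nonneg_right (le_abs_self c₁) hsq
    rw [hY ω (s (k + 1)), hY ω (s k)]
    rw [hAdef] at hω
    simp only [Set.mem_preimage, hSdef] at hω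
    by_cases hcase : r (s (k + 1)) - l (s k) ≤ c₁ * Real.sqrt (s (k + 1) - s k)
    · rw [if_pos hcase] at hω
      have hωm : a * Real.sqrt (s (k + 1) - s k) ≤ B (s (k + 1)) ω - B (s k) ω := hω
      have hkey : -(Xi l r (fun u => x + B u ω) (s (k + 1))) - -(Xi l r (fun u => x + B u ω) (s k))
          ≤ -Real.sqrt (s (k + 1) - s k) := by
        have h1 := hW2.1
        have h2 := hW1.2
        rw [hadef] at hωm
        nlinarith [hωm, hc₁, hcase]
      calc Real.sqrt (s (k + 1) - s k)
          ≤ -(-(Xi l r (fun u => x + B u ω) (s (k + 1))) - -(Xi l r (fun u => x + B u ω) (s k))) := by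
            linarith
        _ ≤ |(-(Xi l r (fun u => x + B u ω) (s (k + 1)))) - -(Xi l r (fun u => x + B u ω) (s k))| :=
            neg_le_abs _
    · rw [if_neg hcase] at hω
      have hother : r (s k) - l (s (k + 1)) ≤ c₁ * Real.sqrt (s (k + 1) - s k) :=
        (min_le_iff.1 (hmin k hk hk1)).resolve_left hcase
      have hωm : B (s (k + 1)) ω - B (s k) ω ≤ -(a * Real.sqrt (s (k + 1) - s k)) := hω
      have hkey : Real.sqrt (s (k + 1) - s k) ≤
          -(Xi l r (fun u => x + B u ω) (s (k + 1))) - -(Xi l r (fun u => x + B u ω) (s k)) := by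
        have h1 := hW2.2
        have h2 := hW1.1
        rw [hadef] at hωm
        nlinarith [hωm, hc₁, hother]
      exact le_trans hkey (le_abs_self _)
  -- probability lower bound
  set p : ℝ≥0∞ := min (gaussianReal 0 1 (Set.Ici a)) (gaussianReal 0 1 (Set.Iic (-a))) with hpdef
  have hp_pos : 0 < p := by
    apply lt_min
    · exact gaussian_pos_of_volume_pos (by rw [Real.volume_Ici]; exact ENNReal.zero_lt_top)
    · exact gaussian_pos_of_volume_pos (by rw [Real.volume_Iic]; exact ENNReal.zero_lt_top)
  have hp_top : p ≠ ⊤ := (lt_of_le_of_lt (min_le_left _ _) (measure_lt_top _ _)).ne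
  set pr : ℝ := p.toReal with hprdef
  have hpr_pos : 0 < pr := ENNReal.toReal_pos hp_pos.ne' hp_top
  have hp_le : ∀ k : ℤ, k ∈ K → k + 1 ∈ K → p ≤ ℙ (A k) := by
    intro k hk hk1
    have hmeas_inc : Measurable (fun ω => B (s (k + 1)) ω - B (s k) ω) :=
      (hBmeas _).sub (hBmeas _)
    have hmap := hB.2.2.2.1 (s k) (s (k + 1)) (hsτ k hk).1 (le_of_lt (hs hk hk1 (lt_add_one k)))
    have hPA : ℙ (A k) = gaussianReal 0 (Real.toNNReal (s (k + 1) - s k)) (S k) := by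
      rw [← hmap, Measure.map_apply hmeas_inc (hSmeas k)]
    rw [hPA, hSdef]
    dsimp only
    split
    · rw [gaussian_scale_Ici (hΔpos k hk hk1) a]
      exact min_le_left _ _
    · rw [gaussian_scale_Iic (hΔpos k hk hk1) a]
      exact min_le_right _ _
  -- the sum of the truncated increments diverges
  have hsum_m : ∑' k : {k : ℤ // k ∈ K ∧ k + 1 ∈ K}, ENNReal.ofReal (m (k : ℤ)) = ⊤ := by
    by_contra hfin
    set C : ℝ≥0∞ := ENNReal.ofReal (max 1 (Real.sqrt τ)) with hC
    have hle : ∀ k : {k : ℤ // k ∈ K ∧ k + 1 ∈ K},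
        ENNReal.ofReal (Real.sqrt (s ((k : ℤ) + 1) - s (k : ℤ))) ≤
          C * ENNReal.ofReal (m (k : ℤ)) := by
      intro k
      have hk := k.2.1
      have hk1 := k.2.2
      have hs1 : Real.sqrt (s ((k : ℤ) + 1) - s (k : ℤ)) ≤ Real.sqrt τ :=
        Real.sqrt_le_sqrt (hΔτ _ hk hk1)
      rcases le_or_gt (Real.sqrt (s ((k : ℤ) + 1) - s (k : ℤ))) 1 with h1 | h1
      · have hmeq : m (k : ℤ) = Real.sqrt (s ((k : ℤ) + 1) - s (k : ℤ)) := min_eq_left h1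
        rw [hmeq]
        calc ENNReal.ofReal (Real.sqrt (s ((k : ℤ) + 1) - s (k : ℤ)))
            = 1 * ENNReal.ofReal (Real.sqrt (s ((k : ℤ) + 1) - s (k : ℤ))) := (one_mul _).symm
          _ ≤ C * ENNReal.ofReal (Real.sqrt (s ((k : ℤ) + 1) - s (k : ℤ))) := by
              apply mul_le_mul_left
              rw [hC]
              exact ENNReal.one_le_ofReal.2 (le_max_left _ _)
      · have hmeq : m (k : ℤ) = 1 := min_eq_right h1.le
        rw [hmeq]
        calc ENNReal.ofReal (Real.sqrt (s ((k : ℤ) + 1) - s (k : ℤ)))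
            ≤ ENNReal.ofReal (max 1 (Real.sqrt τ)) :=
              ENNReal.ofReal_le_ofReal (le_trans hs1 (le_max_right _ _))
          _ = C * ENNReal.ofReal 1 := by rw [ENNReal.ofReal_one, mul_one, hC]
    have htop : (⊤ : ℝ≥0∞) ≤ C * ∑' k : {k : ℤ // k ∈ K ∧ k + 1 ∈ K}, ENNReal.ofReal (m (k : ℤ)) := by
      rw [← hsum]
      calc ∑' k : {k : ℤ // k ∈ K ∧ k + 1 ∈ K},
            ENNReal.ofReal (Real.sqrt (s ((k : ℤ) + 1) - s (k : ℤ)))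
          ≤ ∑' k : {k : ℤ // k ∈ K ∧ k + 1 ∈ K}, C * ENNReal.ofReal (m (k : ℤ)) :=
            ENNReal.tsum_le_tsum hle
        _ = C * ∑' k : {k : ℤ // k ∈ K ∧ k + 1 ∈ K}, ENNReal.ofReal (m (k : ℤ)) :=
            ENNReal.tsum_mul_left
    have : C * ∑' k : {k : ℤ // k ∈ K ∧ k + 1 ∈ K}, ENNReal.ofReal (m (k : ℤ)) ≠ ⊤ :=
      ENNReal.mul_ne_top ENNReal.ofReal_ne_top hfin
    exact this (top_le_iff.1 htop)
  -- blocks with large truncated sums exist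
  have hblock : ∀ M : ℝ, 1 ≤ M → ∃ k₀ k₁ : ℤ, k₀ ≤ k₁ ∧
      (∀ k : ℤ, k₀ ≤ k → k ≤ k₁ → (k ∈ K ∧ k + 1 ∈ K)) ∧
      M ≤ ∑ k ∈ Finset.Icc k₀ k₁, m k := by
    intro M hM
    have h1 : ENNReal.ofReal M < ∑' k : {k : ℤ // k ∈ K ∧ k + 1 ∈ K}, ENNReal.ofReal (m (k : ℤ)) := by
      rw [hsum_m]
      exact ENNReal.ofReal_lt_top
    rw [ENNReal.tsum_eq_iSup_sum] at h1
    obtain ⟨T, hT⟩ := lt_iSup_iff.1 h1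
    have hTne : T.Nonempty := by
      rcases Finset.eq_empty_or_nonempty T with rfl | h
      · simp only [Finset.sum_empty] at hT
        exact absurd hT (not_lt.2 zero_le)
      · exact h
    set Tv : Finset ℤ := T.image (fun k : {k : ℤ // k ∈ K ∧ k + 1 ∈ K} => (k : ℤ)) with hTv
    have hTvne : Tv.Nonempty := hTne.image _
    set k₀ : ℤ := Tv.min' hTvne with hk₀
    set k₁ : ℤ := Tv.max' hTvne with hk₁
    have hmemK : ∀ k ∈ Tv, k ∈ K ∧ k + 1 ∈ K := by
      intro k hk
      rw [hTv] at hk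
      obtain ⟨k', _, hkeq⟩ := Finset.mem_image.1 hk
      exact hkeq ▸ k'.2
    have hk₀K := hmemK k₀ (Tv.min'_mem hTvne)
    have hk₁K := hmemK k₁ (Tv.max'_mem hTvne)
    refine ⟨k₀, k₁, Tv.min'_le k₁ (Tv.max'_mem hTvne), ?_, ?_⟩
    · intro k hki hki'
      constructor
      · exact hK.out hk₀K.1 hk₁K.2 ⟨hki, by linarith⟩
      · exact hK.out hk₀K.1 hk₁K.2 ⟨by linarith, by linarith⟩
    · have h2 : ∑ k ∈ T, ENNReal.ofReal (m (k : ℤ)) = ∑ k ∈ Tv, ENNReal.ofReal (m k) := by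
        rw [hTv]
        rw [Finset.sum_image (by intro y hy z hz hyz; exact Subtype.ext hyz)]
      have h3 : Tv ⊆ Finset.Icc k₀ k₁ := by
        intro k hk
        exact Finset.mem_Icc.2 ⟨Tv.min'_le k hk, Tv.le_max' k hk⟩
      have h4 : ∑ k ∈ Tv, ENNReal.ofReal (m k) ≤ ∑ k ∈ Finset.Icc k₀ k₁, ENNReal.ofReal (m k) :=
        Finset.sum_le_sum_of_subset h3
      have h5 : ∑ k ∈ Finset.Icc k₀ k₁, ENNReal.ofReal (m k)
          = ENNReal.ofReal (∑ k ∈ Finset.Icc k₀ k₁, m k) :=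
        (ENNReal.ofReal_sum_of_nonneg (fun k _ => hm0 k)).symm
      have h6 : ENNReal.ofReal M < ENNReal.ofReal (∑ k ∈ Finset.Icc k₀ k₁, m k) := by
        rw [← h5]
        exact lt_of_lt_of_le hT (le_trans (le_of_eq h2) h4)
      exact le_of_lt ((ENNReal.ofReal_lt_ofReal_iff_of_nonneg (by linarith)).1 h6)
  -- the per-block estimate
  have hNblock : ∀ (N : ℕ) (k₀ k₁ : ℤ), k₀ ≤ k₁ →
      (∀ k : ℤ, k₀ ≤ k → k ≤ k₁ → (k ∈ K ∧ k + 1 ∈ K)) →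
      ℙ {ω | eVariationOn (Y ω) (Set.Icc 0 τ) ≤ (N : ℝ≥0∞)} ≤
        ENNReal.ofReal (Real.exp ((N : ℝ) - pr / 2 * ∑ k ∈ Finset.Icc k₀ k₁, m k)) := by
    intro N k₀ k₁ hk01 hkK
    have hKmem : ∀ kk : ℤ, k₀ ≤ kk → kk ≤ k₁ + 1 → kk ∈ K := by
      intro kk h1 h2
      rcases lt_or_eq_of_le h2 with h | h
      · exact (hkK kk h1 (by omega)).1
      · rw [h]
        exact (hkK k₁ hk01 le_rfl).2
    set n : ℕ := (k₁ + 1 - k₀).toNat with hn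
    have hn_cast : (n : ℤ) = k₁ + 1 - k₀ := Int.toNat_of_nonneg (by omega)
    have hn_pos : 0 < n := by omega
    set t : ℕ → ℝ := fun j => s (k₀ + min (j : ℤ) (n : ℤ)) with htdef
    have hidx : ∀ j : ℕ, k₀ ≤ k₀ + min (j : ℤ) (n : ℤ) ∧ k₀ + min (j : ℤ) (n : ℤ) ≤ k₁ + 1 := by
      intro j
      constructor
      · have h1 : (0:ℤ) ≤ min (j : ℤ) (n : ℤ) := le_min (Int.ofNat_nonneg j) (Int.ofNat_nonneg n)
        omega
      · have h1 : min (j : ℤ) (n : ℤ) ≤ (n : ℤ) := min_le_right _ _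
        omega
    have hmemt : ∀ j : ℕ, k₀ + min (j : ℤ) (n : ℤ) ∈ K :=
      fun j => hKmem _ (hidx j).1 (hidx j).2
    have htmono : Monotone t := by
      intro i j hij
      rw [htdef]
      apply hs.monotoneOn (hmemt i) (hmemt j)
      exact add_le_add_right (min_le_min (by exact_mod_cast hij) le_rfl) k₀
    have ht0 : ∀ j, 0 ≤ t j := fun j => (hsτ _ (hmemt j)).1
    have htmem : ∀ j, t j ∈ Set.Icc 0 τ := fun j => hsτ _ (hmemt j)
    have htj : ∀ j : ℕ, j < n → t j = s (k₀ + (j : ℤ)) := by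
      intro j hj
      have h : min (j:ℤ) (n:ℤ) = (j:ℤ) := min_eq_left (by exact_mod_cast hj.le)
      simp only [htdef, h]
    have htj1 : ∀ j : ℕ, j < n → t (j + 1) = s (k₀ + (j : ℤ) + 1) := by
      intro j hj
      have hle : ((j + 1 : ℕ) : ℤ) ≤ (n:ℤ) := by exact_mod_cast hj
      have h : min ((j + 1 : ℕ):ℤ) (n:ℤ) = ((j + 1 : ℕ):ℤ) := min_eq_left hle
      simp only [htdef, h]
      congr 1
      push_cast
      ring
    set X : ℕ → Ω → ℝ := fun j ω => B (t (j + 1)) ω - B (t j) ω with hXdef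
    have hXmeas : ∀ j, Measurable (X j) := fun j => (hBmeas _).sub (hBmeas _)
    have hXindep : iIndepFun (m := fun _ : ℕ => (inferInstance : MeasurableSpace ℝ)) X ℙ :=
      increments_iIndepFun hB t ht0 htmono
    set G : ℕ → ℝ → ℝ≥0∞ := fun j y =>
      if y ∈ S (k₀ + (j : ℤ)) then ENNReal.ofReal (Real.exp (-(m (k₀ + (j : ℤ))))) else 1 with hGdef
    have hGmeas : ∀ j, Measurable (G j) := by
      intro j
      rw [hGdef]
      exact Measurable.ite (hSmeas _) measurable_const measurable_const
    set g : ℕ → Ω → ℝ≥0∞ := fun j => G j ∘ X j with hgdef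
    have hgmeas : ∀ j, Measurable (g j) := fun j => (hGmeas j).comp (hXmeas j)
    have hgindep : iIndepFun (m := fun _ : ℕ => (inferInstance : MeasurableSpace ℝ≥0∞)) g ℙ :=
      hXindep.comp G hGmeas
    have hjK : ∀ j : ℕ, j < n → (k₀ + (j:ℤ)) ∈ K ∧ (k₀ + (j:ℤ)) + 1 ∈ K := by
      intro j hj
      exact hkK (k₀ + (j:ℤ)) (by omega) (by omega)
    have hXA : ∀ j : ℕ, j < n → ∀ ω : Ω, (X j ω ∈ S (k₀ + (j:ℤ)) ↔ ω ∈ A (k₀ + (j:ℤ))) := by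
      intro j hj ω
      rw [hAdef]
      simp only [Set.mem_preimage]
      rw [hXdef]
      dsimp only
      rw [htj j hj, htj1 j hj]
    -- integral bound for each factor
    have hint : ∀ j : ℕ, j < n → ∫⁻ ω, g j ω ∂ℙ ≤
        ENNReal.ofReal (Real.exp (-(pr / 2 * m (k₀ + (j : ℤ))))) := by
      intro j hj
      set e : ℝ≥0∞ := ENNReal.ofReal (Real.exp (-(m (k₀ + (j : ℤ))))) with hedef
      have hgeq : g j = fun ω => Set.indicator (A (k₀ + (j:ℤ))) (fun _ => e) ω
          + Set.indicator (A (k₀ + (j:ℤ)))ᶜ (fun _ => (1:ℝ≥0∞)) ω := by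
        funext ω
        by_cases hω : ω ∈ A (k₀ + (j:ℤ))
        · rw [hgdef]
          dsimp only [Function.comp]
          rw [hGdef]
          dsimp only
          rw [if_pos ((hXA j hj ω).2 hω), Set.indicator_of_mem hω,
            Set.indicator_of_notMem (by simpa using hω), add_zero]
        · rw [hgdef]
          dsimp only [Function.comp]
          rw [hGdef]
          dsimp only
          rw [if_neg (fun hmem => hω ((hXA j hj ω).1 hmem)), Set.indicator_of_notMem hω,
            Set.indicator_of_mem (by simpa using hω), zero_add]
      have hApos := hjK j hj
      have hq := hp_le _ hApos.1 hApos.2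
      have hint1 : ∫⁻ ω, g j ω ∂ℙ = e * ℙ (A (k₀ + (j:ℤ))) + ℙ ((A (k₀ + (j:ℤ)))ᶜ) := by
        rw [hgeq]
        rw [lintegral_add_left (Measurable.indicator measurable_const (hAmeas _))]
        rw [lintegral_indicator (hAmeas _), lintegral_indicator (hAmeas _).compl]
        simp [setLIntegral_const]
      have hcompl : ℙ ((A (k₀ + (j:ℤ)))ᶜ) = 1 - ℙ (A (k₀ + (j:ℤ))) :=
        prob_compl_eq_one_sub (hAmeas _)
      rw [hint1, hcompl, hedef]
      exact factor_bound prob_le_one hq hp_top (hm0 _) (hm1 _)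
    -- reindexing the sum
    have hreindex : ∑ j ∈ Finset.range n, m (k₀ + (j:ℤ)) = ∑ k ∈ Finset.Icc k₀ k₁, m k := by
      refine Finset.sum_nbij' (i := fun j => k₀ + (j:ℤ)) (j := fun k => (k - k₀).toNat)
        ?_ ?_ ?_ ?_ ?_
      · intro j hj
        have h := Finset.mem_range.1 hj
        refine Finset.mem_Icc.2 ⟨by omega, by omega⟩
      · intro k hk
        have h := Finset.mem_Icc.1 hk
        refine Finset.mem_range.2 (by omega)
      · intro j hj
        have h := Finset.mem_range.1 hj
        omega
      · intro k hk
        have h := Finset.mem_Icc.1 hk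
        omega
      · intro j hj
        rfl
    -- product bound
    have hprodmeas : Measurable fun ω => ∏ j ∈ Finset.range n, g j ω :=
      Finset.measurable_prod _ fun j _ => hgmeas j
    have hprod_int : ∫⁻ ω, ∏ j ∈ Finset.range n, g j ω ∂ℙ ≤
        ENNReal.ofReal (Real.exp (-(pr / 2 * ∑ k ∈ Finset.Icc k₀ k₁, m k))) := by
      rw [lintegral_prod_range_of_iIndepFun g hgmeas hgindep n]
      calc ∏ j ∈ Finset.range n, ∫⁻ ω, g j ω ∂ℙ
          ≤ ∏ j ∈ Finset.range n, ENNReal.ofReal (Real.exp (-(pr / 2 * m (k₀ + (j:ℤ))))) :=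
            Finset.prod_le_prod' fun j hj => hint j (Finset.mem_range.1 hj)
        _ = ENNReal.ofReal (∏ j ∈ Finset.range n, Real.exp (-(pr / 2 * m (k₀ + (j:ℤ))))) :=
            (ENNReal.ofReal_prod_of_nonneg fun j _ => (Real.exp_pos _).le).symm
        _ = ENNReal.ofReal (Real.exp (∑ j ∈ Finset.range n, -(pr / 2 * m (k₀ + (j:ℤ))))) := by
            rw [Real.exp_sum]
        _ = _ := by
            congr 2
            have h1 : ∑ j ∈ Finset.range n, -(pr / 2 * m (k₀ + (j:ℤ)))
                = -(pr / 2 * ∑ j ∈ Finset.range n, m (k₀ + (j:ℤ))) := by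
              rw [Finset.mul_sum, ← Finset.sum_neg_distrib]
            rw [h1, hreindex]
    -- the measurable majorant set
    set D : Set Ω := {ω | ∑ j ∈ Finset.range n,
        (if X j ω ∈ S (k₀ + (j:ℤ)) then m (k₀ + (j:ℤ)) else 0) ≤ (N : ℝ)} with hDdef
    have hDmeas : MeasurableSet D := by
      apply measurableSet_le ?_ measurable_const
      apply Finset.measurable_sum
      intro j _
      exact Measurable.ite (hXmeas j (hSmeas _)) measurable_const measurable_const
    have hsubset : {ω | eVariationOn (Y ω) (Set.Icc 0 τ) ≤ (N : ℝ≥0∞)} ⊆ D := by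
      intro ω hω
      have hvar := eVariationOn.sum_le (f := Y ω) (n := n) htmono htmem
      have hedist : ∀ j : ℕ, edist (Y ω (t (j+1))) (Y ω (t j))
          = ENNReal.ofReal (|Y ω (t (j+1)) - Y ω (t j)|) := by
        intro j
        rw [edist_dist, Real.dist_eq]
      have hsum1 : ENNReal.ofReal (∑ j ∈ Finset.range n, |Y ω (t (j+1)) - Y ω (t j)|)
          ≤ (N : ℝ≥0∞) := by
        rw [ENNReal.ofReal_sum_of_nonneg fun j _ => abs_nonneg _]
        calc ∑ j ∈ Finset.range n, ENNReal.ofReal (|Y ω (t (j+1)) - Y ω (t j)|)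
            = ∑ j ∈ Finset.range n, edist (Y ω (t (j+1))) (Y ω (t j)) :=
              Finset.sum_congr rfl fun j _ => (hedist j).symm
          _ ≤ eVariationOn (Y ω) (Set.Icc 0 τ) := hvar
          _ ≤ (N:ℝ≥0∞) := hω
      have hsum2 : ∑ j ∈ Finset.range n, |Y ω (t (j+1)) - Y ω (t j)| ≤ (N:ℝ) := by
        have hN : ((N:ℕ):ℝ≥0∞) = ENNReal.ofReal ((N:ℕ):ℝ) := by
          rw [ENNReal.ofReal_natCast]
        rw [hN] at hsum1
        exact (ENNReal.ofReal_le_ofReal_iff (by positivity)).1 hsum1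
      rw [hDdef]
      simp only [Set.mem_setOf_eq]
      refine le_trans (Finset.sum_le_sum ?_) hsum2
      intro j hj
      have hjlt := Finset.mem_range.1 hj
      split_ifs with hmem'
      · have hA' : ω ∈ A (k₀ + (j:ℤ)) := (hXA j hjlt ω).1 hmem'
        have hjk := hjK j hjlt
        have hkey := key1 _ hjk.1 hjk.2 ω hA'
        rw [htj j hjlt, htj1 j hjlt]
        exact le_trans (hmsqrt _) hkey
      · exact abs_nonneg _
    have hlower : ∀ ω ∈ D, ENNReal.ofReal (Real.exp (-(N:ℝ))) ≤ ∏ j ∈ Finset.range n, g j ω := by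
      intro ω hω
      have hprod_eq : ∏ j ∈ Finset.range n, g j ω = ENNReal.ofReal (Real.exp
          (-(∑ j ∈ Finset.range n, (if X j ω ∈ S (k₀ + (j:ℤ)) then m (k₀ + (j:ℤ)) else 0)))) := by
        rw [← Finset.sum_neg_distrib, Real.exp_sum,
          ENNReal.ofReal_prod_of_nonneg fun j _ => (Real.exp_pos _).le]
        apply Finset.prod_congr rfl
        intro j _
        rw [hgdef]
        dsimp only [Function.comp]
        rw [hGdef]
        dsimp only
        split_ifs with h
        · rfl
        · rw [neg_zero, Real.exp_zero, ENNReal.ofReal_one]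
      rw [hprod_eq]
      apply ENNReal.ofReal_le_ofReal
      apply Real.exp_le_exp.2
      exact neg_le_neg hω
    have hmarkov : ENNReal.ofReal (Real.exp (-(N:ℝ))) * ℙ D ≤
        ENNReal.ofReal (Real.exp (-(pr / 2 * ∑ k ∈ Finset.Icc k₀ k₁, m k))) := by
      have h1 : ENNReal.ofReal (Real.exp (-(N:ℝ))) * ℙ D
          = ∫⁻ _ in D, ENNReal.ofReal (Real.exp (-(N:ℝ))) ∂ℙ := by
        rw [setLIntegral_const]
      rw [h1]
      calc ∫⁻ _ in D, ENNReal.ofReal (Real.exp (-(N:ℝ))) ∂ℙ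
          ≤ ∫⁻ ω in D, ∏ j ∈ Finset.range n, g j ω ∂ℙ :=
            setLIntegral_mono hprodmeas hlower
        _ ≤ ∫⁻ ω, ∏ j ∈ Finset.range n, g j ω ∂ℙ := setLIntegral_le_lintegral _ _
        _ ≤ _ := hprod_int
    calc ℙ {ω | eVariationOn (Y ω) (Set.Icc 0 τ) ≤ (N : ℝ≥0∞)} ≤ ℙ D := measure_mono hsubset
      _ = ENNReal.ofReal (Real.exp ((N:ℝ))) * (ENNReal.ofReal (Real.exp (-(N:ℝ))) * ℙ D) := by
          rw [← mul_assoc, ← ENNReal.ofReal_mul (Real.exp_pos _).le, ← Real.exp_add,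
            add_neg_cancel, Real.exp_zero, ENNReal.ofReal_one, one_mul]
      _ ≤ ENNReal.ofReal (Real.exp ((N:ℝ))) *
            ENNReal.ofReal (Real.exp (-(pr / 2 * ∑ k ∈ Finset.Icc k₀ k₁, m k))) :=
          mul_le_mul_right hmarkov _
      _ = ENNReal.ofReal (Real.exp ((N:ℝ) - pr / 2 * ∑ k ∈ Finset.Icc k₀ k₁, m k)) := by
          rw [← ENNReal.ofReal_mul (Real.exp_pos _).le, ← Real.exp_add]
          ring_nf
  -- each sublevel event is null
  have hNzero : ∀ N : ℕ, ℙ {ω | eVariationOn (Y ω) (Set.Icc 0 τ) ≤ (N : ℝ≥0∞)} = 0 := by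
    intro N
    have hε : ∀ ε : ℝ, 0 < ε → ℙ {ω | eVariationOn (Y ω) (Set.Icc 0 τ) ≤ (N : ℝ≥0∞)}
        ≤ ENNReal.ofReal ε := by
      intro ε hεpos
      set M : ℝ := max 1 (2 * ((N:ℝ) - Real.log ε) / pr) with hM
      obtain ⟨k₀, k₁, hk01, hkK', hMle⟩ := hblock M (le_max_left _ _)
      refine le_trans (hNblock N k₀ k₁ hk01 hkK') ?_
      apply ENNReal.ofReal_le_ofReal
      have h2 : (N:ℝ) - Real.log ε ≤ pr / 2 * M := by
        have ha : 2 * ((N:ℝ) - Real.log ε) / pr ≤ M := le_max_right _ _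
        have hb := mul_le_mul_of_nonneg_left ha (by positivity : (0:ℝ) ≤ pr / 2)
        calc (N:ℝ) - Real.log ε = pr / 2 * (2 * ((N:ℝ) - Real.log ε) / pr) := by
              field_simp
          _ ≤ pr / 2 * M := hb
      have h3 : pr / 2 * M ≤ pr / 2 * ∑ k ∈ Finset.Icc k₀ k₁, m k :=
        mul_le_mul_of_nonneg_left hMle (by positivity)
      calc Real.exp ((N:ℝ) - pr / 2 * ∑ k ∈ Finset.Icc k₀ k₁, m k)
          ≤ Real.exp (Real.log ε) := Real.exp_le_exp.2 (by linarith)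
        _ = ε := Real.exp_log hεpos
    refine le_antisymm ?_ zero_le
    refine ENNReal.le_of_forall_pos_le_add fun δ hδ _ => ?_
    rw [zero_add]
    calc ℙ {ω | eVariationOn (Y ω) (Set.Icc 0 τ) ≤ (N : ℝ≥0∞)}
        ≤ ENNReal.ofReal ((δ:ℝ≥0):ℝ) := hε _ (by exact_mod_cast hδ)
      _ = ((δ:ℝ≥0) : ℝ≥0∞) := ENNReal.ofReal_coe_nnreal
  -- conclusion
  rw [MeasureTheory.ae_iff]
  have hsub2 : {ω | ¬ eVariationOn (Y ω) (Set.Icc 0 τ) = ⊤}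
      ⊆ ⋃ N : ℕ, {ω | eVariationOn (Y ω) (Set.Icc 0 τ) ≤ (N : ℝ≥0∞)} := by
    intro ω hω
    obtain ⟨N, hN⟩ := ENNReal.exists_nat_gt
      (hω : eVariationOn (Y ω) (Set.Icc 0 τ) ≠ ⊤)
    exact Set.mem_iUnion.2 ⟨N, hN.le⟩
  exact le_antisymm (le_trans (measure_mono hsub2)
    (le_of_eq (measure_iUnion_null fun N => hNzero N))) zero_le
end
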